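/- arXiv:1707.08694 — 3 statements merged into one kernel-verified Lean document; each statement's English description precedes it below -/
import Mathlib

section
/- Let V be a right-closed monoidal category (i.e. for every object V the functor (-) ⊗ V has a right adjoint). For an object V of V, tensors by V in V-enriched categories are absolute (i.e. preserved by every V-functor out of any V-category admitting them) if and only if V admits a left dual in V. -/
/-!
STATEMENT 1: Let V be a right-closed monoidal category (i.e. for every object V the
functor (-) ⊗ V has a right adjoint).  For an object v of V, tensors by v in
V-enriched categories are absolute (preserved by every V-functor) if and only if
v admits a left dual in V.

Conventions: we follow Mathlib's enriched-category conventions, in which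
`eComp V X Y Z : (X ⟶[V] Y) ⊗ (Y ⟶[V] Z) ⟶ (X ⟶[V] Z)`.  Under this convention the
tensor product of Mathlib is the *reverse* of the tensor product used in the paper
(`A ⊗_paper B = B ⊗ A`), so the paper's right-closure "(−) ⊗ V has a right adjoint"
becomes "`tensorLeft v` has a right adjoint", and a *left dual* of `v` in the paper's
sense is an object `w` with an exact pairing `ExactPairing w v`
(this is Mathlib's notion of left dual as well).
-/

universe w v u u₁ u₂

open CategoryTheory MonoidalCategory Limits

namespace Paper

variable (V : Type u) [Category.{v} V] [MonoidalCategory V]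

/-- `u` exhibits `Y` as the tensor of `X` by `v ∈ V`: for every `w ∈ V` and `Z ∈ C`,
pasting with `u` gives a bijection between maps `w ⟶ C(Y,Z)` and maps
`v ⊗ w ⟶ C(X,Z)` (which, in the paper's tensor-order, is `w ⊗ v ⟶ C(X,Z)`). -/
def IsTensor {C : Type u₁} [EnrichedCategory V C] (v : V) (X Y : C)
    (u : v ⟶ (X ⟶[V] Y)) : Prop :=
  ∀ (w : V) (Z : C), Function.Bijective
    (fun f : w ⟶ ((Y ⟶[V] Z) : V) => (u ⊗ₘ f) ≫ eComp V X Y Z)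

/-- A `V`-functor `F` preserves a tensor `(Y, u)` of `X` by `v` when the composite of
`u` with the action of `F` on homs exhibits `F.obj Y` as the tensor of `F.obj X` by `v`. -/
def PreservesTensor {C : Type u₁} {D : Type u₂} [EnrichedCategory V C]
    [EnrichedCategory V D] (F : EnrichedFunctor V C D) (v : V) (X Y : C)
    (u : v ⟶ (X ⟶[V] Y)) : Prop :=
  IsTensor V v (F.obj X) (F.obj Y) (u ≫ F.map X Y)

/-- Tensors by `v` are absolute: every tensor by `v` existing in any `V`-category is
preserved by every `V`-functor out of it. -/
def TensorsAbsolute (v : V) : Prop :=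
  ∀ (C : Type u₁) (D : Type u₂) (_ : EnrichedCategory V C) (_ : EnrichedCategory V D)
    (F : EnrichedFunctor V C D) (X Y : C) (u : v ⟶ (X ⟶[V] Y)),
    IsTensor V v X Y u → PreservesTensor V F v X Y u

/-- `V` is right closed: tensoring (in the paper's order `(−) ⊗ v`, i.e. Mathlib's
`tensorLeft v`) admits a right adjoint for every `v`. -/
def RightClosed : Prop := ∀ v : V, (tensorLeft v).IsLeftAdjoint

/-- `v` admits a left dual in `V` (a left adjoint of `v` in the delooping bicategory of
`V`): an object `w` together with an exact pairing exhibiting `w` as a left dual of `v`. -/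
def HasLeftDualObj (v : V) : Prop := ∃ w : V, Nonempty (ExactPairing w v)


/-! ### Auxiliary machinery -/

section Aux

variable {V}

section EnrichedAux

variable {C' : Type u₁} [EnrichedCategory V C']

theorem assoc_aux {A B G : V} {O P Q R : C'} (a : A ⟶ (O ⟶[V] P)) (b : B ⟶ (P ⟶[V] Q))
    (g : G ⟶ (Q ⟶[V] R)) :
    (a ⊗ₘ ((b ⊗ₘ g) ≫ eComp V P Q R)) ≫ eComp V O P R
      = (α_ A B G).inv ≫ (((a ⊗ₘ b) ≫ eComp V O P Q) ⊗ₘ g) ≫ eComp V O Q R := by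
  have h1 : a ⊗ₘ ((b ⊗ₘ g) ≫ eComp V P Q R) = (a ⊗ₘ (b ⊗ₘ g)) ≫ (_ ◁ eComp V P Q R) := by
    rw [← id_tensorHom, tensorHom_comp_tensorHom, Category.comp_id]
  have h2 : ((a ⊗ₘ b) ≫ eComp V O P Q) ⊗ₘ g = ((a ⊗ₘ b) ⊗ₘ g) ≫ (eComp V O P Q ▷ _) := by
    rw [← tensorHom_id, tensorHom_comp_tensorHom, Category.comp_id]
  rw [h1, h2, Category.assoc, ← e_assoc V O P Q R, associator_inv_naturality_assoc]
  simp only [Category.assoc]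

theorem comp_eId_aux {A : V} {X Y : C'} (u : A ⟶ (X ⟶[V] Y)) :
    (u ⊗ₘ eId V Y) ≫ eComp V X Y Y = (ρ_ A).hom ≫ u := by
  rw [tensorHom_def u (eId V Y), Category.assoc]
  have h : (X ⟶[V] Y) ◁ eId V Y ≫ eComp V X Y Y = (ρ_ (X ⟶[V] Y)).hom := by
    have := e_comp_id V X Y
    rw [Iso.inv_comp_eq] at this
    simpa using this
  rw [h, rightUnitor_naturality]

theorem eId_comp_aux {A : V} {X Z : C'} (g : A ⟶ (X ⟶[V] Z)) :
    (eId V X ⊗ₘ g) ≫ eComp V X X Z = (λ_ A).hom ≫ g := by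
  rw [tensorHom_def' (eId V X) g, Category.assoc]
  have h : eId V X ▷ (X ⟶[V] Z) ≫ eComp V X X Z = (λ_ (X ⟶[V] Z)).hom := by
    have := e_id_comp V X Z
    rw [Iso.inv_comp_eq] at this
    simpa using this
  rw [h, leftUnitor_naturality]

/-- Generalized zigzag-whisker lemma. -/
theorem zigzag_whisker_aux {w v : V} (eta : 𝟙_ V ⟶ w ⊗ v) (eps : v ⊗ w ⟶ 𝟙_ V)
    (hza : (v ◁ eta) ≫ (α_ v w v).inv ≫ (eps ▷ v) = (ρ_ v).hom ≫ (λ_ v).inv) (w' : V) :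
    (v ◁ (λ_ w').inv) ≫ (v ◁ (eta ▷ w')) ≫ (v ◁ (α_ w v w').hom) ≫ (α_ v w (v ⊗ w')).inv ≫
      (eps ▷ (v ⊗ w')) ≫ (λ_ (v ⊗ w')).hom = 𝟙 (v ⊗ w') := by
  calc (v ◁ (λ_ w').inv) ≫ (v ◁ (eta ▷ w')) ≫ (v ◁ (α_ w v w').hom) ≫ (α_ v w (v ⊗ w')).inv ≫
      (eps ▷ (v ⊗ w')) ≫ (λ_ (v ⊗ w')).hom
      = (v ◁ (λ_ w').inv) ≫ (α_ v (𝟙_ V) w').inv ≫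
        (((v ◁ eta) ≫ (α_ v w v).inv ≫ (eps ▷ v)) ▷ w') ≫ ((λ_ v).hom ▷ w') := by
        coherence
    _ = (v ◁ (λ_ w').inv) ≫ (α_ v (𝟙_ V) w').inv ≫
        (((ρ_ v).hom ≫ (λ_ v).inv) ▷ w') ≫ ((λ_ v).hom ▷ w') := by rw [hza]
    _ = 𝟙 (v ⊗ w') := by coherence

theorem isTensor_of_triangles (w v : V) [ExactPairing w v] (X Y : C')
    (u : v ⟶ (X ⟶[V] Y)) (ub : w ⟶ (Y ⟶[V] X))
    (T1 : (u ⊗ₘ ub) ≫ eComp V X Y X = ε_ w v ≫ eId V X)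
    (T2 : η_ w v ≫ ((ub ⊗ₘ u) ≫ eComp V Y X Y) = eId V Y) :
    IsTensor V v X Y u := by
  intro w' Z
  rw [Function.bijective_iff_has_inverse]
  refine ⟨fun g => (λ_ w').inv ≫ η_ w v ▷ w' ≫ (α_ w v w').hom ≫
      ((ub ⊗ₘ g) ≫ eComp V Y X Z), ?_, ?_⟩
  · intro f
    dsimp only
    rw [assoc_aux, Iso.hom_inv_id_assoc]
    have hs : η_ w v ▷ w' ≫ ((((ub ⊗ₘ u) ≫ eComp V Y X Y) ⊗ₘ f) ≫ eComp V Y Y Z)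
        = ((η_ w v ≫ ((ub ⊗ₘ u) ≫ eComp V Y X Y)) ⊗ₘ f) ≫ eComp V Y Y Z := by
      rw [← tensorHom_id, ← Category.assoc, tensorHom_comp_tensorHom, Category.id_comp]
    rw [hs, T2, eId_comp_aux]
    simp
  · intro g
    dsimp only
    have hsplit : (u ⊗ₘ ((λ_ w').inv ≫ η_ w v ▷ w' ≫ (α_ w v w').hom ≫
        ((ub ⊗ₘ g) ≫ eComp V Y X Z)))
        = (v ◁ (λ_ w').inv) ≫ (v ◁ (η_ w v ▷ w')) ≫ (v ◁ (α_ w v w').hom) ≫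
          (u ⊗ₘ ((ub ⊗ₘ g) ≫ eComp V Y X Z)) := by
      simp only [← id_tensorHom, tensorHom_comp_tensorHom, Category.id_comp, Category.comp_id]
    rw [hsplit]
    simp only [Category.assoc]
    rw [assoc_aux, T1]
    have hT : (((ε_ w v ≫ eId V X) ⊗ₘ g) ≫ eComp V X X Z)
        = (ε_ w v ▷ (v ⊗ w')) ≫ (λ_ (v ⊗ w')).hom ≫ g := by
      have : (ε_ w v ≫ eId V X) ⊗ₘ g = (ε_ w v ⊗ₘ g) ≫ (eId V X ⊗ₘ 𝟙 _) := by
        rw [tensorHom_comp_tensorHom, Category.comp_id]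
      rw [this, Category.assoc]
      rw [show (eId V X ⊗ₘ 𝟙 (X ⟶[V] Z)) ≫ eComp V X X Z = (λ_ _).hom ≫ 𝟙 _ from
        eId_comp_aux (𝟙 _), Category.comp_id]
      rw [tensorHom_def (ε_ w v) g, Category.assoc, leftUnitor_naturality]
    rw [hT]
    have hz := zigzag_whisker_aux (η_ w v) (ε_ w v)
      (ExactPairing.coevaluation_evaluation w v) w'
    calc (v ◁ (λ_ w').inv) ≫ (v ◁ (η_ w v ▷ w')) ≫ (v ◁ (α_ w v w').hom) ≫
          (α_ v w (v ⊗ w')).inv ≫ (ε_ w v ▷ (v ⊗ w')) ≫ (λ_ (v ⊗ w')).hom ≫ g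
        = ((v ◁ (λ_ w').inv) ≫ (v ◁ (η_ w v ▷ w')) ≫ (v ◁ (α_ w v w').hom) ≫
            (α_ v w (v ⊗ w')).inv ≫ (ε_ w v ▷ (v ⊗ w')) ≫ (λ_ (v ⊗ w')).hom) ≫ g := by
          simp only [Category.assoc]
      _ = g := by rw [hz, Category.id_comp]

theorem triangles_of_isTensor (w v : V) [ExactPairing w v] (X Y : C')
    (u : v ⟶ (X ⟶[V] Y)) (ht : IsTensor V v X Y u) :
    ∃ ub : w ⟶ ((Y ⟶[V] X) : V),
      (u ⊗ₘ ub) ≫ eComp V X Y X = ε_ w v ≫ eId V X ∧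
      η_ w v ≫ ((ub ⊗ₘ u) ≫ eComp V Y X Y) = eId V Y := by
  obtain ⟨ub, hub⟩ := (ht w X).2 (ε_ w v ≫ eId V X)
  dsimp only at hub
  refine ⟨ub, hub, ?_⟩
  apply (ht (𝟙_ V) Y).1
  dsimp only
  rw [comp_eId_aux]
  have hsplit : u ⊗ₘ (η_ w v ≫ ((ub ⊗ₘ u) ≫ eComp V Y X Y))
      = (v ◁ η_ w v) ≫ (u ⊗ₘ ((ub ⊗ₘ u) ≫ eComp V Y X Y)) := by
    rw [← id_tensorHom, tensorHom_comp_tensorHom, Category.id_comp]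
  rw [hsplit, Category.assoc, assoc_aux, hub]
  have hT : (((ε_ w v ≫ eId V X) ⊗ₘ u) ≫ eComp V X X Y)
      = (ε_ w v ▷ v) ≫ (λ_ v).hom ≫ u := by
    have : (ε_ w v ≫ eId V X) ⊗ₘ u = (ε_ w v ⊗ₘ u) ≫ (eId V X ⊗ₘ 𝟙 _) := by
      rw [tensorHom_comp_tensorHom, Category.comp_id]
    rw [this, Category.assoc]
    rw [show (eId V X ⊗ₘ 𝟙 (X ⟶[V] Y)) ≫ eComp V X X Y = (λ_ _).hom ≫ 𝟙 _ from
      eId_comp_aux (𝟙 _), Category.comp_id]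
    rw [tensorHom_def (ε_ w v) u, Category.assoc, leftUnitor_naturality]
  rw [hT]
  calc (v ◁ η_ w v) ≫ (α_ v w v).inv ≫ (ε_ w v ▷ v) ≫ (λ_ v).hom ≫ u
      = ((v ◁ η_ w v) ≫ (α_ v w v).inv ≫ (ε_ w v ▷ v)) ≫ (λ_ v).hom ≫ u := by
        simp only [Category.assoc]
    _ = ((ρ_ v).hom ≫ (λ_ v).inv) ≫ (λ_ v).hom ≫ u := by
        rw [ExactPairing.coevaluation_evaluation]
    _ = (ρ_ v).hom ≫ u := by simp

end EnrichedAux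

section ClosedAux

variable [MonoidalClosed V]

open scoped MonoidalClosed

lemma self_eComp (x y z : V) : eComp V x y z = MonoidalClosed.comp x y z := rfl
lemma self_eId (x : V) : eId V x = MonoidalClosed.id x := rfl
lemma self_hom (x y : V) : (EnrichedCategory.Hom x y : V) = (ihom x).obj y := rfl

theorem E1 {v w Z : V} (f : w ⟶ (ihom v).obj Z) :
    (MonoidalClosed.curry (λ_ v).hom ⊗ₘ f) ≫ eComp V (𝟙_ V) v Z
      = MonoidalClosed.curry ((λ_ (v ⊗ w)).hom ≫ MonoidalClosed.uncurry f) := by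
  apply MonoidalClosed.uncurry_injective
  rw [self_eComp, MonoidalClosed.comp_eq, MonoidalClosed.uncurry_natural_left,
      MonoidalClosed.uncurry_curry, MonoidalClosed.uncurry_curry,
      MonoidalClosed.compTranspose_eq]
  have h1 : (𝟙_ V) ◁ (MonoidalClosed.curry (λ_ v).hom ⊗ₘ f) ≫
      (α_ (𝟙_ V) ((ihom (𝟙_ V)).obj v) ((ihom v).obj Z)).inv
      = (α_ (𝟙_ V) v w).inv ≫ (((𝟙_ V) ◁ MonoidalClosed.curry (λ_ v).hom) ⊗ₘ f) := by
    rw [← id_tensorHom, associator_inv_naturality]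
    simp [id_tensorHom]
  rw [← Category.assoc, h1]
  have h2 : (((𝟙_ V) ◁ MonoidalClosed.curry (λ_ v).hom) ⊗ₘ f) ≫
      ((ihom.ev (𝟙_ V)).app v ▷ (ihom v).obj Z)
      = ((λ_ v).hom ⊗ₘ f) := by
    rw [← tensorHom_id, tensorHom_comp_tensorHom, Category.comp_id, ← MonoidalClosed.uncurry_eq,
        MonoidalClosed.uncurry_curry]
  rw [Category.assoc, ← Category.assoc (_ ⊗ₘ f), h2]
  rw [MonoidalCategory.tensorHom_def, Category.assoc, ← MonoidalClosed.uncurry_eq, leftUnitor_tensor_hom]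
  simp [Category.assoc]

theorem isTensor_unit (v : V) :
    IsTensor V v (𝟙_ V) v (MonoidalClosed.curry (λ_ v).hom) := by
  intro w Z
  rw [Function.bijective_iff_has_inverse]
  refine ⟨fun g => MonoidalClosed.curry ((λ_ (v ⊗ w)).inv ≫ MonoidalClosed.uncurry g), ?_, ?_⟩
  · intro f
    dsimp only
    rw [E1, MonoidalClosed.uncurry_curry, Iso.inv_hom_id_assoc, MonoidalClosed.curry_uncurry]
  · intro g
    dsimp only
    rw [E1, MonoidalClosed.uncurry_curry, Iso.hom_inv_id_assoc, MonoidalClosed.curry_uncurry]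

noncomputable def ihomFunctor (v : V) : EnrichedFunctor V V V where
  obj X := (ihom v).obj X
  map X Y := MonoidalClosed.curry (eComp V v X Y)
  map_id X := by
    apply MonoidalClosed.uncurry_injective
    rw [MonoidalClosed.uncurry_natural_left, self_eComp, MonoidalClosed.uncurry_curry]
    simp only [self_eId, MonoidalClosed.id_eq, MonoidalClosed.uncurry_curry]
    have := MonoidalClosed.comp_id (C := V) v X
    rw [Iso.inv_comp_eq] at this
    simpa [MonoidalClosed.id_eq] using this
  map_comp X Y Z := by
    apply MonoidalClosed.uncurry_injective
    simp only [self_eComp]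
    rw [MonoidalClosed.uncurry_natural_left, MonoidalClosed.uncurry_natural_left,
        MonoidalClosed.comp_eq ((ihom v).obj X) ((ihom v).obj Y) ((ihom v).obj Z)]
    simp only [MonoidalClosed.uncurry_curry]
    rw [MonoidalClosed.compTranspose_eq, ← MonoidalClosed.assoc]
    have h1 : ((ihom v).obj X) ◁ (MonoidalClosed.curry (MonoidalClosed.comp v X Y) ⊗ₘ
        MonoidalClosed.curry (MonoidalClosed.comp v Y Z)) ≫ (α_ _ _ _).inv
        = (α_ _ _ _).inv ≫ ((((ihom v).obj X) ◁ MonoidalClosed.curry (MonoidalClosed.comp v X Y)) ⊗ₘ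
            MonoidalClosed.curry (MonoidalClosed.comp v Y Z)) := by
      rw [← id_tensorHom, associator_inv_naturality]
      simp [id_tensorHom]
    have h2 : ((((ihom v).obj X) ◁ MonoidalClosed.curry (MonoidalClosed.comp v X Y)) ⊗ₘ
        MonoidalClosed.curry (MonoidalClosed.comp v Y Z)) ≫
          ((ihom.ev ((ihom v).obj X)).app ((ihom v).obj Y) ▷ _)
        = (MonoidalClosed.comp v X Y ⊗ₘ MonoidalClosed.curry (MonoidalClosed.comp v Y Z)) := by
      rw [← tensorHom_id, tensorHom_comp_tensorHom, Category.comp_id, ← MonoidalClosed.uncurry_eq,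
          MonoidalClosed.uncurry_curry]
    slice_rhs 1 2 => rw [h1]
    slice_rhs 2 3 => rw [h2]
    rw [MonoidalCategory.tensorHom_def]
    slice_rhs 3 4 => rw [← MonoidalClosed.uncurry_eq, MonoidalClosed.uncurry_curry]

noncomputable def kmap (v : V) : (ihom v).obj (𝟙_ V) ⊗ v ⟶ (ihom v).obj v :=
  ((ihom v).obj (𝟙_ V) ◁ MonoidalClosed.curry (λ_ v).hom) ≫ MonoidalClosed.comp v (𝟙_ V) v

theorem uncurry_u' (v : V) :
    MonoidalClosed.uncurry (MonoidalClosed.curry (λ_ v).hom ≫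
      MonoidalClosed.curry (eComp V v (𝟙_ V) v)) = kmap v := by
  rw [MonoidalClosed.uncurry_natural_left, self_eComp, MonoidalClosed.comp_eq,
      MonoidalClosed.uncurry_curry, kmap, MonoidalClosed.comp_eq]
  rfl

theorem E2 {v Z : V} (g : (ihom v).obj v ⟶ Z) :
    ((MonoidalClosed.curry (λ_ v).hom ≫ MonoidalClosed.curry (eComp V v (𝟙_ V) v)) ⊗ₘ
        MonoidalClosed.curry ((ρ_ ((ihom v).obj v)).hom ≫ g)) ≫
      eComp V ((ihom v).obj (𝟙_ V)) ((ihom v).obj v) Z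
      = MonoidalClosed.curry (((ihom v).obj (𝟙_ V) ◁ (ρ_ v).hom) ≫ kmap v ≫ g) := by
  apply MonoidalClosed.uncurry_injective
  rw [MonoidalClosed.uncurry_natural_left,
      show MonoidalClosed.uncurry (eComp V ((ihom v).obj (𝟙_ V)) ((ihom v).obj v) Z)
        = MonoidalClosed.compTranspose _ _ _ from by
          rw [self_eComp, MonoidalClosed.comp_eq, MonoidalClosed.uncurry_curry],
      MonoidalClosed.uncurry_curry, MonoidalClosed.compTranspose_eq]
  have h1 : ((ihom v).obj (𝟙_ V)) ◁ ((MonoidalClosed.curry (λ_ v).hom ≫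
        MonoidalClosed.curry (eComp V v (𝟙_ V) v)) ⊗ₘ
        MonoidalClosed.curry ((ρ_ ((ihom v).obj v)).hom ≫ g)) ≫
        (α_ ((ihom v).obj (𝟙_ V)) ((ihom ((ihom v).obj (𝟙_ V))).obj ((ihom v).obj v))
          ((ihom ((ihom v).obj v)).obj Z)).inv
      = (α_ ((ihom v).obj (𝟙_ V)) v (𝟙_ V)).inv ≫
        ((((ihom v).obj (𝟙_ V)) ◁ (MonoidalClosed.curry (λ_ v).hom ≫
          MonoidalClosed.curry (eComp V v (𝟙_ V) v))) ⊗ₘ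
          MonoidalClosed.curry ((ρ_ ((ihom v).obj v)).hom ≫ g)) := by
    have := associator_inv_naturality (𝟙 ((ihom v).obj (𝟙_ V)))
      (MonoidalClosed.curry (λ_ v).hom ≫ MonoidalClosed.curry (eComp V v (𝟙_ V) v))
      (MonoidalClosed.curry ((ρ_ ((ihom v).obj v)).hom ≫ g))
    simp only [id_tensorHom] at this
    exact this
  have h2 : ((((ihom v).obj (𝟙_ V)) ◁ (MonoidalClosed.curry (λ_ v).hom ≫
        MonoidalClosed.curry (eComp V v (𝟙_ V) v))) ⊗ₘ
        MonoidalClosed.curry ((ρ_ ((ihom v).obj v)).hom ≫ g)) ≫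
        ((ihom.ev ((ihom v).obj (𝟙_ V))).app ((ihom v).obj v) ▷ _)
      = (kmap v ⊗ₘ MonoidalClosed.curry ((ρ_ ((ihom v).obj v)).hom ≫ g)) := by
    rw [← tensorHom_id, tensorHom_comp_tensorHom, Category.comp_id]
    congr 1
    exact (MonoidalClosed.uncurry_eq _).symm.trans (uncurry_u' v)
  slice_lhs 1 2 => rw [h1]
  slice_lhs 2 3 => rw [h2]
  rw [MonoidalCategory.tensorHom_def]
  slice_lhs 3 4 => rw [← MonoidalClosed.uncurry_eq, MonoidalClosed.uncurry_curry]
  slice_lhs 2 3 => rw [rightUnitor_naturality]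
  slice_lhs 1 2 => rw [show (α_ ((ihom v).obj (𝟙_ V)) v (𝟙_ V)).inv ≫ (ρ_ ((ihom v).obj (𝟙_ V) ⊗ v)).hom
      = (ihom v).obj (𝟙_ V) ◁ (ρ_ v).hom from by coherence]
  simp [Category.assoc]

theorem kmap_isIso {v : V}
    (ht : IsTensor V v ((ihom v).obj (𝟙_ V)) ((ihom v).obj v)
      (MonoidalClosed.curry (λ_ v).hom ≫ MonoidalClosed.curry (eComp V v (𝟙_ V) v))) :
    IsIso (kmap v) := by
  have key : ∀ (Z : V), ∀ h : (ihom v).obj (𝟙_ V) ⊗ v ⟶ Z,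
      ∃ g : (ihom v).obj v ⟶ Z, kmap v ≫ g = h := by
    intro Z h
    obtain ⟨f, hf⟩ := (ht (𝟙_ V) Z).2
      (MonoidalClosed.curry (((ihom v).obj (𝟙_ V) ◁ (ρ_ v).hom) ≫ h))
    refine ⟨(ρ_ ((ihom v).obj v)).inv ≫ MonoidalClosed.uncurry f, ?_⟩
    have hfg : MonoidalClosed.curry ((ρ_ ((ihom v).obj v)).hom ≫
        ((ρ_ ((ihom v).obj v)).inv ≫ MonoidalClosed.uncurry f)) = f := by
      rw [Iso.hom_inv_id_assoc, MonoidalClosed.curry_uncurry]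
    have hE := E2 (v := v) ((ρ_ ((ihom v).obj v)).inv ≫ MonoidalClosed.uncurry f)
    rw [hfg] at hE
    dsimp only at hf
    rw [hf] at hE
    have hc := MonoidalClosed.curry_injective hE
    exact ((cancel_epi ((ihom v).obj (𝟙_ V) ◁ (ρ_ v).hom)).mp hc).symm
  have keyinj : ∀ (Z : V), ∀ g₁ g₂ : (ihom v).obj v ⟶ Z,
      kmap v ≫ g₁ = kmap v ≫ g₂ → g₁ = g₂ := by
    intro Z g₁ g₂ h12
    have e1 := E2 (v := v) g₁
    have e2 := E2 (v := v) g₂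
    have h3 : ((MonoidalClosed.curry (λ_ v).hom ≫ MonoidalClosed.curry (eComp V v (𝟙_ V) v)) ⊗ₘ
        MonoidalClosed.curry ((ρ_ ((ihom v).obj v)).hom ≫ g₁)) ≫
          eComp V ((ihom v).obj (𝟙_ V)) ((ihom v).obj v) Z
        = ((MonoidalClosed.curry (λ_ v).hom ≫ MonoidalClosed.curry (eComp V v (𝟙_ V) v)) ⊗ₘ
          MonoidalClosed.curry ((ρ_ ((ihom v).obj v)).hom ≫ g₂)) ≫
          eComp V ((ihom v).obj (𝟙_ V)) ((ihom v).obj v) Z := by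
      rw [e1, e2, h12]
    have h4 := (ht (𝟙_ V) Z).1 h3
    have h5 := MonoidalClosed.curry_injective h4
    simpa using h5
  obtain ⟨g₀, hg₀⟩ := key _ (𝟙 _)
  have hinv : g₀ ≫ kmap v = 𝟙 _ := by
    apply keyinj
    rw [← Category.assoc, hg₀, Category.id_comp, Category.comp_id]
  exact ⟨g₀, hg₀, hinv⟩

theorem kmap_ev {v : V} :
    (v ◁ kmap v) ≫ (ihom.ev v).app v
      = (α_ v ((ihom v).obj (𝟙_ V)) v).inv ≫ ((ihom.ev v).app (𝟙_ V) ▷ v) ≫ (λ_ v).hom := by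
  rw [kmap, MonoidalCategory.whiskerLeft_comp, Category.assoc]
  rw [show v ◁ MonoidalClosed.comp v (𝟙_ V) v ≫ (ihom.ev v).app v
      = MonoidalClosed.compTranspose v (𝟙_ V) v from by
        rw [← MonoidalClosed.uncurry_eq, MonoidalClosed.comp_eq, MonoidalClosed.uncurry_curry]]
  rw [MonoidalClosed.compTranspose_eq]
  have h1 : v ◁ ((ihom v).obj (𝟙_ V) ◁ MonoidalClosed.curry (λ_ v).hom) ≫
      (α_ v ((ihom v).obj (𝟙_ V)) ((ihom (𝟙_ V)).obj v)).inv
      = (α_ v ((ihom v).obj (𝟙_ V)) v).inv ≫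
        ((v ⊗ (ihom v).obj (𝟙_ V)) ◁ MonoidalClosed.curry (λ_ v).hom) := by
    exact (associator_inv_naturality_right _ _ _)
  slice_lhs 1 2 => rw [h1]
  have h2 : ((v ⊗ (ihom v).obj (𝟙_ V)) ◁ MonoidalClosed.curry (λ_ v).hom) ≫
      ((ihom.ev v).app (𝟙_ V) ▷ (ihom (𝟙_ V)).obj v)
      = ((ihom.ev v).app (𝟙_ V) ▷ v) ≫ ((𝟙_ V) ◁ MonoidalClosed.curry (λ_ v).hom) := by
    exact whisker_exchange _ _
  slice_lhs 2 3 => rw [h2]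
  have h3 : (𝟙_ V) ◁ MonoidalClosed.curry (λ_ v).hom ≫ (ihom.ev (𝟙_ V)).app v = (λ_ v).hom := by
    rw [← MonoidalClosed.uncurry_eq, MonoidalClosed.uncurry_curry]
  slice_lhs 3 4 => rw [h3]

theorem za {v : V} [IsIso (kmap v)] :
    (v ◁ (MonoidalClosed.id v ≫ inv (kmap v))) ≫ (α_ v ((ihom v).obj (𝟙_ V)) v).inv ≫
      ((ihom.ev v).app (𝟙_ V) ▷ v) = (ρ_ v).hom ≫ (λ_ v).inv := by
  have hA := kmap_ev (v := v)
  have h2 : (α_ v ((ihom v).obj (𝟙_ V)) v).inv ≫ ((ihom.ev v).app (𝟙_ V) ▷ v)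
      = (v ◁ kmap v) ≫ (ihom.ev v).app v ≫ (λ_ v).inv := by
    conv_rhs => rw [← Category.assoc, hA]
    simp [Category.assoc]
  rw [MonoidalCategory.whiskerLeft_comp, Category.assoc, h2]
  have h3 : v ◁ inv (kmap v) ≫ v ◁ kmap v = 𝟙 _ := by
    rw [← MonoidalCategory.whiskerLeft_comp, IsIso.inv_hom_id, MonoidalCategory.whiskerLeft_id]
  slice_lhs 2 3 => rw [h3]
  have h4 : v ◁ MonoidalClosed.id v ≫ (ihom.ev v).app v = (ρ_ v).hom := by
    rw [← MonoidalClosed.uncurry_eq, MonoidalClosed.id_eq, MonoidalClosed.uncurry_curry]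
  simp only [Category.id_comp, Category.comp_id]
  slice_lhs 1 2 => rw [h4]

/-- Generalized zigzag-whisker lemma. -/
theorem zigzag_whisker_aux' {w v : V} (eta : 𝟙_ V ⟶ w ⊗ v) (eps : v ⊗ w ⟶ 𝟙_ V)
    (hza : (v ◁ eta) ≫ (α_ v w v).inv ≫ (eps ▷ v) = (ρ_ v).hom ≫ (λ_ v).inv) (w' : V) :
    (v ◁ (λ_ w').inv) ≫ (v ◁ (eta ▷ w')) ≫ (v ◁ (α_ w v w').hom) ≫ (α_ v w (v ⊗ w')).inv ≫
      (eps ▷ (v ⊗ w')) ≫ (λ_ (v ⊗ w')).hom = 𝟙 (v ⊗ w') := by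
  calc (v ◁ (λ_ w').inv) ≫ (v ◁ (eta ▷ w')) ≫ (v ◁ (α_ w v w').hom) ≫ (α_ v w (v ⊗ w')).inv ≫
      (eps ▷ (v ⊗ w')) ≫ (λ_ (v ⊗ w')).hom
      = (v ◁ (λ_ w').inv) ≫ (α_ v (𝟙_ V) w').inv ≫
        (((v ◁ eta) ≫ (α_ v w v).inv ≫ (eps ▷ v)) ▷ w') ≫ ((λ_ v).hom ▷ w') := by
        coherence
    _ = (v ◁ (λ_ w').inv) ≫ (α_ v (𝟙_ V) w').inv ≫
        (((ρ_ v).hom ≫ (λ_ v).inv) ▷ w') ≫ ((λ_ v).hom ▷ w') := by rw [hza]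
    _ = 𝟙 (v ⊗ w') := by coherence

theorem zb {v : V} [IsIso (kmap v)] :
    ((MonoidalClosed.id v ≫ inv (kmap v)) ▷ ((ihom v).obj (𝟙_ V))) ≫
      (α_ ((ihom v).obj (𝟙_ V)) v ((ihom v).obj (𝟙_ V))).hom ≫
      (((ihom v).obj (𝟙_ V)) ◁ (ihom.ev v).app (𝟙_ V))
      = (λ_ ((ihom v).obj (𝟙_ V))).hom ≫ (ρ_ ((ihom v).obj (𝟙_ V))).inv := by
  set W := (ihom v).obj (𝟙_ V) with hW
  set eta : 𝟙_ V ⟶ W ⊗ v := MonoidalClosed.id v ≫ inv (kmap v) with heta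
  set eps : v ⊗ W ⟶ 𝟙_ V := (ihom.ev v).app (𝟙_ V) with heps
  suffices hs : (λ_ W).inv ≫ (eta ▷ W) ≫ (α_ W v W).hom ≫ (W ◁ eps) ≫ (ρ_ W).hom = 𝟙 W by
    have := congrArg (fun t => (λ_ W).hom ≫ t ≫ (ρ_ W).inv) hs
    simpa [Category.assoc] using this
  apply MonoidalClosed.uncurry_injective (A := v)
  rw [show MonoidalClosed.uncurry (𝟙 W) = eps from MonoidalClosed.uncurry_id_eq_ev v (𝟙_ V),
      MonoidalClosed.uncurry_eq]
  calc v ◁ ((λ_ W).inv ≫ eta ▷ W ≫ (α_ W v W).hom ≫ W ◁ eps ≫ (ρ_ W).hom) ≫ eps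
      = (v ◁ (λ_ W).inv) ≫ (v ◁ (eta ▷ W)) ≫ (v ◁ (α_ W v W).hom) ≫ (v ◁ (W ◁ eps)) ≫
        (v ◁ (ρ_ W).hom) ≫ eps := by
        simp only [MonoidalCategory.whiskerLeft_comp, Category.assoc]
    _ = (v ◁ (λ_ W).inv) ≫ (v ◁ (eta ▷ W)) ≫ (v ◁ (α_ W v W).hom) ≫ (α_ v W (v ⊗ W)).inv ≫
        ((v ⊗ W) ◁ eps) ≫ (ρ_ (v ⊗ W)).hom ≫ eps := by
        have hmove : (v ◁ (W ◁ eps)) ≫ (v ◁ (ρ_ W).hom)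
            = (α_ v W (v ⊗ W)).inv ≫ ((v ⊗ W) ◁ eps) ≫ (α_ v W (𝟙_ V)).hom ≫ (v ◁ (ρ_ W).hom) := by
          have hn : (v ◁ (W ◁ eps)) ≫ (α_ v W (𝟙_ V)).inv
              = (α_ v W (v ⊗ W)).inv ≫ ((v ⊗ W) ◁ eps) :=
            associator_inv_naturality_right _ _ _
          conv_rhs => rw [← Category.assoc, ← hn]
          simp [Category.assoc]
        slice_lhs 4 5 => rw [hmove]
        have h5 : (α_ v W (𝟙_ V)).hom ≫ (v ◁ (ρ_ W).hom) = (ρ_ (v ⊗ W)).hom := by coherence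
        slice_lhs 6 7 => rw [h5]
    _ = (v ◁ (λ_ W).inv) ≫ (v ◁ (eta ▷ W)) ≫ (v ◁ (α_ W v W).hom) ≫ (α_ v W (v ⊗ W)).inv ≫
        (eps ▷ (v ⊗ W)) ≫ (λ_ (v ⊗ W)).hom ≫ eps := by
        have swap : ((v ⊗ W) ◁ eps) ≫ (ρ_ (v ⊗ W)).hom ≫ eps
            = (eps ▷ (v ⊗ W)) ≫ (λ_ (v ⊗ W)).hom ≫ eps := by
          rw [← rightUnitor_naturality, ← leftUnitor_naturality]
          rw [← Category.assoc, whisker_exchange, Category.assoc, unitors_equal]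
        slice_lhs 5 7 => rw [swap]
    _ = eps := by
        have := zigzag_whisker_aux' eta eps (za (v := v)) W
        calc _ = ((v ◁ (λ_ W).inv) ≫ (v ◁ (eta ▷ W)) ≫ (v ◁ (α_ W v W).hom) ≫
            (α_ v W (v ⊗ W)).inv ≫ (eps ▷ (v ⊗ W)) ≫ (λ_ (v ⊗ W)).hom) ≫ eps := by
              simp only [Category.assoc]
          _ = eps := by rw [this, Category.id_comp]

noncomputable def pairingOfKmap (v : V) [IsIso (kmap v)] :
    ExactPairing ((ihom v).obj (𝟙_ V)) v where
  coevaluation' := MonoidalClosed.id v ≫ inv (kmap v)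
  evaluation' := (ihom.ev v).app (𝟙_ V)
  coevaluation_evaluation' := za
  evaluation_coevaluation' := zb

end ClosedAux

end Aux

/-- Proposition 2 of the paper: over a right-closed monoidal category
`V`, tensors by `v` are absolute if and only if `v` admits a left dual in `V`. -/
theorem tensors_absolute_iff_hasLeftDual
    (hV : RightClosed V) (v : V) :
    (∀ (C D : Type u) (_ : EnrichedCategory V C) (_ : EnrichedCategory V D)
        (F : EnrichedFunctor V C D) (X Y : C) (u : v ⟶ (X ⟶[V] Y)),
      IsTensor V v X Y u → PreservesTensor V F v X Y u) ↔ HasLeftDualObj V v := by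
  constructor
  · intro h
    haveI : MonoidalClosed V :=
      ⟨fun X => by haveI := hV X; exact ⟨(tensorLeft X).rightAdjoint, Adjunction.ofIsLeftAdjoint _⟩⟩
    letI : EnrichedCategory V V := (MonoidalClosed.enrichedCategorySelf V)
    have habs := h V V (MonoidalClosed.enrichedCategorySelf V) (MonoidalClosed.enrichedCategorySelf V)
      (ihomFunctor v) (𝟙_ V) v (MonoidalClosed.curry (λ_ v).hom) (isTensor_unit v)
    have ht : IsTensor V v ((ihom v).obj (𝟙_ V)) ((ihom v).obj v)
        (MonoidalClosed.curry (λ_ v).hom ≫ MonoidalClosed.curry (eComp V v (𝟙_ V) v)) := habs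
    haveI := kmap_isIso ht
    exact ⟨(ihom v).obj (𝟙_ V), ⟨pairingOfKmap v⟩⟩
  · rintro ⟨w, ⟨p⟩⟩ C D instC instD F X Y u ht
    obtain ⟨ub, T1, T2⟩ := triangles_of_isTensor w v X Y u ht
    apply isTensor_of_triangles w v (F.obj X) (F.obj Y) (u ≫ F.map X Y) (ub ≫ F.map Y X)
    · rw [← tensorHom_comp_tensorHom, Category.assoc, ← EnrichedFunctor.map_comp]
      rw [← Category.assoc (u ⊗ₘ ub), T1, Category.assoc, EnrichedFunctor.map_id]
    · rw [← tensorHom_comp_tensorHom, Category.assoc, ← EnrichedFunctor.map_comp]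
      rw [show η_ w v ≫ (ub ⊗ₘ u) ≫ eComp V Y X Y ≫ F.map Y Y
          = (η_ w v ≫ (ub ⊗ₘ u) ≫ eComp V Y X Y) ≫ F.map Y Y from by
            simp only [Category.assoc], T2, EnrichedFunctor.map_id]

end Paper
end

section
/- Let W be a bicategory, C a W-category, X an object of C of extent x, and W ∈ W(x,y) a 1-cell admitting a left adjoint W* ∈ W(y,x) with unit η : I_y → W ⊗ W* and counit ε : W* ⊗ W → I_x. Then for any object Y of C of extent y, there is a bijective correspondence between: (a) 2-cells u : W → C(X,Y) exhibiting Y as the tensor W·X; and (b) pairs of 2-cells u : W → C(X,Y) and u* : W* → C(Y,X) such that μ ∘ (u ⊗ u*) ∘ η = ι_Y : I_y → C(Y,Y) and μ ∘ (u* ⊗ u) = ι_X ∘ ε : W* ⊗ W → C(X,X). -/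
/-!
STATEMENT 13 (Proposition 17 of the paper): Let W be a bicategory, C a W-category, X an
object of C of extent x, and f ∈ W(x,y) a 1-cell admitting a left adjoint
f* ∈ W(y,x) with unit η : 𝟙 y ⟶ f* ≫ f and counit ε : f ≫ f* ⟶ 𝟙 x (in the paper's
1-cell composition order, η : I_y → f ⊗ f* and ε : f* ⊗ f → I_x).  Then for any object
Y of C of extent y there is a bijective correspondence between
(a) 2-cells u : f ⟶ C(X,Y) exhibiting Y as the tensor f · X, and
(b) pairs of 2-cells u : f ⟶ C(X,Y), u* : f* ⟶ C(Y,X) satisfying the two square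
identities μ ∘ (u ⊗ u*) ∘ η = ι_Y and μ ∘ (u* ⊗ u) = ι_X ∘ ε.
We formalise the correspondence as: a 2-cell `u` exhibits `Y` as `f · X` if and only if
there is a unique `u*` satisfying the two identities.
-/
universe w₁ w v u

open CategoryTheory Bicategory

namespace Paper

variable (W : Type u) [Bicategory.{w, v} W]

/-- A `W`-category, for `W` a bicategory: a family of objects indexed by their extents,
hom 1-cells `C(X,Y) : εX ⟶ εY`, together with identity and composition 2-cells
satisfying the usual associativity and unit axioms. -/
structure WCat where
  Obj : W → Type w₁
  Hom : ∀ {x y : W}, Obj x → Obj y → (x ⟶ y)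
  eid : ∀ {x} (X : Obj x), 𝟙 x ⟶ Hom X X
  ecomp : ∀ {x y z} (X : Obj x) (Y : Obj y) (Z : Obj z),
    (Hom X Y ≫ Hom Y Z) ⟶ Hom X Z
  id_comp : ∀ {x y} (X : Obj x) (Y : Obj y),
    (eid X ▷ Hom X Y) ≫ ecomp X X Y = (λ_ (Hom X Y)).hom
  comp_id : ∀ {x y} (X : Obj x) (Y : Obj y),
    (Hom X Y ◁ eid Y) ≫ ecomp X Y Y = (ρ_ (Hom X Y)).hom
  assoc : ∀ {x y z t} (X : Obj x) (Y : Obj y) (Z : Obj z) (T : Obj t),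
    (ecomp X Y Z ▷ Hom Z T) ≫ ecomp X Z T =
      (α_ (Hom X Y) (Hom Y Z) (Hom Z T)).hom ≫ (Hom X Y ◁ ecomp Y Z T) ≫ ecomp X Y T

variable {W}

/-- A `W`-functor: an extent-preserving map on objects together with 2-cells on homs,
compatible with identities and composition. -/
structure WFunctor (C D : WCat.{w₁} W) where
  obj : ∀ {x}, C.Obj x → D.Obj x
  map : ∀ {x y} (X : C.Obj x) (Y : C.Obj y), C.Hom X Y ⟶ D.Hom (obj X) (obj Y)
  map_id : ∀ {x} (X : C.Obj x), C.eid X ≫ map X X = D.eid (obj X)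
  map_comp : ∀ {x y z} (X : C.Obj x) (Y : C.Obj y) (Z : C.Obj z),
    C.ecomp X Y Z ≫ map X Z =
      (map X Y ▷ C.Hom Y Z) ≫ (D.Hom (obj X) (obj Y) ◁ map Y Z) ≫
        D.ecomp (obj X) (obj Y) (obj Z)

/-- A `W`-natural transformation between `W`-functors. -/
structure WTrans {C D : WCat.{w₁} W} (G G' : WFunctor C D) where
  app : ∀ {x} (X : C.Obj x), 𝟙 x ⟶ D.Hom (G.obj X) (G'.obj X)
  naturality : ∀ {x y} (X : C.Obj x) (Y : C.Obj y),
    (λ_ (C.Hom X Y)).inv ≫ (app X ▷ C.Hom X Y) ≫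
      (D.Hom (G.obj X) (G'.obj X) ◁ G'.map X Y) ≫
        D.ecomp (G.obj X) (G'.obj X) (G'.obj Y) =
    (ρ_ (C.Hom X Y)).inv ≫ (G.map X Y ▷ 𝟙 y) ≫
      (D.Hom (G.obj X) (G.obj Y) ◁ app Y) ≫
        D.ecomp (G.obj X) (G.obj Y) (G'.obj Y)

/-- The 2-cell `u : f ⟶ C(X,Y)` exhibits `Y` as the tensor `f · X`: for every 1-cell
`g` out of the extent of `Y` and every object `Z`, pasting with `u` gives a bijection
between 2-cells `g ⟶ C(Y,Z)` and 2-cells `f ≫ g ⟶ C(X,Z)`. -/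
def IsWTensor (C : WCat.{w₁} W) {x y : W} (X : C.Obj x) (f : x ⟶ y) (Y : C.Obj y)
    (u : f ⟶ C.Hom X Y) : Prop :=
  ∀ {z : W} (g : y ⟶ z) (Z : C.Obj z), Function.Bijective
    (fun θ : g ⟶ C.Hom Y Z =>
      (u ▷ g) ≫ (C.Hom X Y ◁ θ) ≫ C.ecomp X Y Z)

/-- A `W`-functor `G` preserves the tensor `(Y, u)` of `X` by `f`. -/
def PreservesWTensor {C D : WCat.{w₁} W} (G : WFunctor C D) {x y : W} (X : C.Obj x)
    (f : x ⟶ y) (Y : C.Obj y) (u : f ⟶ C.Hom X Y) : Prop :=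
  IsWTensor D (G.obj X) f (G.obj Y) (u ≫ G.map X Y)

end Paper

namespace Paper

section Aux

variable {W : Type u} [Bicategory.{w, v} W] (C : WCat.{w₁} W) {x y : W}
  (X : C.Obj x) (f : x ⟶ y) (fstar : y ⟶ x) (adj : Bicategory.Adjunction fstar f)
  (Y : C.Obj y) (u : f ⟶ C.Hom X Y) (ustar : fstar ⟶ C.Hom Y X)

lemma assoc_rear {W : Type u} [Bicategory.{w, v} W] {p q r s : W} {AB : p ⟶ q}
    {BC : q ⟶ r} {CD : r ⟶ s} {AC : p ⟶ r}
    {BD : q ⟶ s} {AD : p ⟶ s} {mABC : AB ≫ BC ⟶ AC} {mBCD : BC ≫ CD ⟶ BD}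
    {mACD : AC ≫ CD ⟶ AD} {mABD : AB ≫ BD ⟶ AD}
    (H : (mABC ▷ CD) ≫ mACD = (α_ AB BC CD).hom ≫ (AB ◁ mBCD) ≫ mABD) :
    (AB ◁ mBCD) ≫ mABD = (α_ AB BC CD).inv ≫ (mABC ▷ CD) ≫ mACD := by
  rw [H]; simp

/-- Ψ, the candidate inverse of the tensor pasting map Φ. -/
def psi {z : W} (g : y ⟶ z) (Z : C.Obj z) (φ : f ≫ g ⟶ C.Hom X Z) : g ⟶ C.Hom Y Z :=
  (λ_ g).inv ≫ (adj.unit ▷ g) ≫ (α_ fstar f g).hom ≫ (fstar ◁ φ) ≫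
    (ustar ▷ C.Hom X Z) ≫ C.ecomp Y X Z

lemma phi_psi
    (H2 : (u ▷ fstar) ≫ (C.Hom X Y ◁ ustar) ≫ C.ecomp X Y X = adj.counit ≫ C.eid X)
    {z : W} (g : y ⟶ z) (Z : C.Obj z) (φ : f ≫ g ⟶ C.Hom X Z) :
    (u ▷ g) ≫ (C.Hom X Y ◁ psi C X f fstar adj Y ustar g Z φ) ≫ C.ecomp X Y Z = φ := by
  dsimp only [psi]
  calc (u ▷ g) ≫ (C.Hom X Y ◁ ((λ_ g).inv ≫ (adj.unit ▷ g) ≫ (α_ fstar f g).hom ≫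
        (fstar ◁ φ) ≫ (ustar ▷ C.Hom X Z) ≫ C.ecomp Y X Z)) ≫ C.ecomp X Y Z
      = 𝟙 _ ⊗≫ ((u ▷ (𝟙 y ≫ g)) ≫ (C.Hom X Y ◁ (adj.unit ▷ g))) ⊗≫
          (C.Hom X Y ◁ (fstar ◁ φ)) ⊗≫ ((C.Hom X Y ◁ ustar) ▷ C.Hom X Z) ⊗≫
          ((C.Hom X Y ◁ C.ecomp Y X Z) ≫ C.ecomp X Y Z) := by
        bicategory
    _ = 𝟙 _ ⊗≫ (f ◁ (adj.unit ▷ g)) ⊗≫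
          ((u ▷ (fstar ≫ f ≫ g)) ≫ (C.Hom X Y ◁ (fstar ◁ φ))) ⊗≫
          ((C.Hom X Y ◁ ustar) ▷ C.Hom X Z) ⊗≫
          ((C.Hom X Y ◁ C.ecomp Y X Z) ≫ C.ecomp X Y Z) := by
        rw [← whisker_exchange]; bicategory
    _ = 𝟙 _ ⊗≫ (f ◁ (adj.unit ▷ g)) ⊗≫ (f ◁ (fstar ◁ φ)) ⊗≫
          (((u ▷ fstar) ≫ (C.Hom X Y ◁ ustar) ≫ C.ecomp X Y X) ▷ C.Hom X Z) ⊗≫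
          C.ecomp X X Z := by
        rw [← whisker_exchange, assoc_rear (C.assoc X Y X Z)]; bicategory
    _ = 𝟙 _ ⊗≫ (f ◁ (adj.unit ▷ g)) ⊗≫ (((f ≫ fstar) ◁ φ) ≫ (adj.counit ▷ C.Hom X Z)) ⊗≫
          ((C.eid X ▷ C.Hom X Z) ≫ C.ecomp X X Z) := by
        rw [H2]; bicategory
    _ = 𝟙 _ ⊗≫ ((rightZigzag adj.unit adj.counit) ▷ g) ⊗≫ φ := by
        rw [whisker_exchange, C.id_comp]; bicategory
    _ = φ := by
        rw [adj.right_triangle]; bicategory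

lemma psi_phi
    (H1 : adj.unit ≫ (ustar ▷ f) ≫ (C.Hom Y X ◁ u) ≫ C.ecomp Y X Y = C.eid Y)
    {z : W} (g : y ⟶ z) (Z : C.Obj z) (θ : g ⟶ C.Hom Y Z) :
    psi C X f fstar adj Y ustar g Z
      ((u ▷ g) ≫ (C.Hom X Y ◁ θ) ≫ C.ecomp X Y Z) = θ := by
  dsimp only [psi]
  calc (λ_ g).inv ≫ (adj.unit ▷ g) ≫ (α_ fstar f g).hom ≫
        (fstar ◁ ((u ▷ g) ≫ (C.Hom X Y ◁ θ) ≫ C.ecomp X Y Z)) ≫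
        (ustar ▷ C.Hom X Z) ≫ C.ecomp Y X Z
      = 𝟙 _ ⊗≫ (adj.unit ▷ g) ⊗≫
          ((fstar ◁ ((u ▷ g) ≫ (C.Hom X Y ◁ θ) ≫ C.ecomp X Y Z)) ≫
            (ustar ▷ C.Hom X Z)) ⊗≫ C.ecomp Y X Z := by
        bicategory
    _ = 𝟙 _ ⊗≫ (adj.unit ▷ g) ⊗≫ (ustar ▷ (f ≫ g)) ⊗≫
          (C.Hom Y X ◁ (u ▷ g)) ⊗≫ (C.Hom Y X ◁ (C.Hom X Y ◁ θ)) ⊗≫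
          ((C.Hom Y X ◁ C.ecomp X Y Z) ≫ C.ecomp Y X Z) := by
        rw [whisker_exchange]; bicategory
    _ = 𝟙 _ ⊗≫ (adj.unit ▷ g) ⊗≫ ((ustar ▷ f) ▷ g) ⊗≫ ((C.Hom Y X ◁ u) ▷ g) ⊗≫
          (((C.Hom Y X ≫ C.Hom X Y) ◁ θ) ≫ (C.ecomp Y X Y ▷ C.Hom Y Z)) ⊗≫
          C.ecomp Y Y Z := by
        rw [assoc_rear (C.assoc Y X Y Z)]; bicategory
    _ = 𝟙 _ ⊗≫ ((adj.unit ≫ (ustar ▷ f) ≫ (C.Hom Y X ◁ u) ≫ C.ecomp Y X Y) ▷ g) ⊗≫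
          ((C.Hom Y Y ◁ θ) ≫ C.ecomp Y Y Z) := by
        rw [whisker_exchange]; bicategory
    _ = 𝟙 _ ⊗≫ ((C.eid Y ▷ g) ≫ (C.Hom Y Y ◁ θ)) ⊗≫ C.ecomp Y Y Z := by
        rw [H1]; bicategory
    _ = 𝟙 _ ⊗≫ (𝟙 y ◁ θ) ⊗≫ ((C.eid Y ▷ C.Hom Y Z) ≫ C.ecomp Y Y Z) := by
        rw [← whisker_exchange]; bicategory
    _ = θ := by
        rw [C.id_comp]; bicategory

/-- Key computation for existence: Φ applied to the unit-composite equals Φ of `eid Y`. -/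
lemma phi_unit_comp
    (H2 : (u ▷ fstar) ≫ (C.Hom X Y ◁ ustar) ≫ C.ecomp X Y X = adj.counit ≫ C.eid X) :
    (u ▷ 𝟙 y) ≫ (C.Hom X Y ◁
        (adj.unit ≫ (ustar ▷ f) ≫ (C.Hom Y X ◁ u) ≫ C.ecomp Y X Y)) ≫ C.ecomp X Y Y =
    (u ▷ 𝟙 y) ≫ (C.Hom X Y ◁ C.eid Y) ≫ C.ecomp X Y Y := by
  have rhs : (u ▷ 𝟙 y) ≫ (C.Hom X Y ◁ C.eid Y) ≫ C.ecomp X Y Y = (ρ_ f).hom ≫ u := by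
    rw [C.comp_id]; bicategory
  rw [rhs]
  calc (u ▷ 𝟙 y) ≫ (C.Hom X Y ◁
        (adj.unit ≫ (ustar ▷ f) ≫ (C.Hom Y X ◁ u) ≫ C.ecomp Y X Y)) ≫ C.ecomp X Y Y
      = 𝟙 _ ⊗≫ ((u ▷ 𝟙 y) ≫ (C.Hom X Y ◁ adj.unit)) ⊗≫
          (C.Hom X Y ◁ (ustar ▷ f)) ⊗≫ (C.Hom X Y ◁ (C.Hom Y X ◁ u)) ⊗≫
          ((C.Hom X Y ◁ C.ecomp Y X Y) ≫ C.ecomp X Y Y) := by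
        bicategory
    _ = 𝟙 _ ⊗≫ ((u ▷ 𝟙 y) ≫ (C.Hom X Y ◁ adj.unit)) ⊗≫
          ((C.Hom X Y ◁ ustar) ▷ f) ⊗≫
          (((C.Hom X Y ≫ C.Hom Y X) ◁ u) ≫ (C.ecomp X Y X ▷ C.Hom X Y)) ⊗≫
          C.ecomp X X Y := by
        rw [assoc_rear (C.assoc X Y X Y)]; bicategory
    _ = 𝟙 _ ⊗≫ (f ◁ adj.unit) ⊗≫ ((u ▷ fstar) ▷ f) ⊗≫
          ((C.Hom X Y ◁ ustar) ▷ f) ⊗≫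
          (((C.Hom X Y ≫ C.Hom Y X) ◁ u) ≫ (C.ecomp X Y X ▷ C.Hom X Y)) ⊗≫
          C.ecomp X X Y := by
        rw [← whisker_exchange]; bicategory
    _ = 𝟙 _ ⊗≫ (f ◁ adj.unit) ⊗≫
          (((u ▷ fstar) ≫ (C.Hom X Y ◁ ustar) ≫ C.ecomp X Y X) ▷ f) ⊗≫
          ((C.Hom X X ◁ u) ≫ C.ecomp X X Y) := by
        rw [whisker_exchange]; bicategory
    _ = 𝟙 _ ⊗≫ (f ◁ adj.unit) ⊗≫ (adj.counit ▷ f) ⊗≫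
          ((C.eid X ▷ f) ≫ (C.Hom X X ◁ u)) ⊗≫ C.ecomp X X Y := by
        rw [H2]; bicategory
    _ = 𝟙 _ ⊗≫ (rightZigzag adj.unit adj.counit) ⊗≫ (𝟙 x ◁ u) ⊗≫
          ((C.eid X ▷ C.Hom X Y) ≫ C.ecomp X X Y) := by
        rw [← whisker_exchange]; bicategory
    _ = (ρ_ f).hom ≫ u := by
        rw [adj.right_triangle, C.id_comp]; bicategory

end Aux

/-- **Statement 13**: if `f` admits a left adjoint `f*`, then `u : f ⟶ C(X,Y)` exhibits
`Y` as the tensor `f · X` iff there is a unique `u* : f* ⟶ C(Y,X)` rendering the two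
squares commutative. -/
theorem isWTensor_iff_existsUnique_adjoint_mate
    {W : Type u} [Bicategory.{w, v} W] (C : WCat.{w₁} W) {x y : W}
    (X : C.Obj x) (f : x ⟶ y) (fstar : y ⟶ x) (adj : Bicategory.Adjunction fstar f)
    (Y : C.Obj y) (u : f ⟶ C.Hom X Y) :
    IsWTensor C X f Y u ↔
      ∃! ustar : fstar ⟶ C.Hom Y X,
        (adj.unit ≫ (ustar ▷ f) ≫ (C.Hom Y X ◁ u) ≫ C.ecomp Y X Y = C.eid Y) ∧
        ((u ▷ fstar) ≫ (C.Hom X Y ◁ ustar) ≫ C.ecomp X Y X = adj.counit ≫ C.eid X) := by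
  constructor
  · intro ht
    obtain ⟨ustar, h2⟩ := (ht fstar X).2 (adj.counit ≫ C.eid X)
    have h1 : adj.unit ≫ (ustar ▷ f) ≫ (C.Hom Y X ◁ u) ≫ C.ecomp Y X Y = C.eid Y :=
      (ht (𝟙 y) Y).1 (phi_unit_comp C X f fstar adj Y u ustar h2)
    refine ⟨ustar, ⟨h1, h2⟩, ?_⟩
    intro v ⟨_, hv2⟩
    exact (ht fstar X).1 (hv2.trans h2.symm)
  · rintro ⟨ustar, ⟨h1, h2⟩, -⟩
    intro z g Z
    exact Function.bijective_iff_has_inverse.2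
      ⟨psi C X f fstar adj Y ustar g Z,
       fun θ => psi_phi C X f fstar adj Y u ustar h1 g Z θ,
       fun φ => phi_psi C X f fstar adj Y u ustar h2 g Z φ⟩


end Paper
end

section
/- Let W be a right-closed bicategory, i.e. one in which for every 1-cell W ∈ W(x,y) and object z, the functor (−) ⊗ W : W(y,z) → W(x,z) admits a right adjoint [W,−]. Then tensors by a 1-cell W ∈ W(x,y) in W-categories are absolute (preserved by every W-functor) if and only if W admits a left adjoint in W; moreover, when tensors by W are absolute, the 1-cell [W, I_x] is a left adjoint of W. -/
/-!
STATEMENT 14 (Proposition 27 of the paper): Let W be a right-closed bicategory: for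
every 1-cell `f ∈ W(x,y)` and object `z`, the functor `(−) ⊗ f : W(y,z) → W(x,z)`
(in Mathlib's diagrammatic order, the precomposition functor `g ↦ f ≫ g`) admits a
right adjoint `[f, −] : W(x,z) → W(y,z)`.  Then tensors by a 1-cell `f ∈ W(x,y)` in
W-categories are absolute (preserved by every W-functor) if and only if `f` admits a
left adjoint in W; moreover, when tensors by `f` are absolute, the 1-cell `[f, 𝟙 x]`
is a left adjoint of `f`.
-/
universe w₁ w v u

open CategoryTheory Bicategory

namespace Paper

variable {W : Type u} [Bicategory.{w, v} W]

/-- The precomposition functor `g ↦ f ≫ g` (the paper's `(−) ⊗ f`). -/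
@[simps]
def precompF {x y : W} (f : x ⟶ y) (z : W) : (y ⟶ z) ⥤ (x ⟶ z) where
  obj g := f ≫ g
  map θ := f ◁ θ

/-- A right-closure structure on a bicategory: chosen right adjoints `[f, −]` to all
the precomposition functors `(−) ⊗ f`. -/
structure RightClosedStr (W : Type u) [Bicategory.{w, v} W] where
  ihom : ∀ {x y : W} (f : x ⟶ y) (z : W), (x ⟶ z) ⥤ (y ⟶ z)
  adj : ∀ {x y : W} (f : x ⟶ y) (z : W), precompF f z ⊣ ihom f z
section Core

variable {C : WCat.{v} W} {x y : W} {X : C.Obj x} {Y : C.Obj y}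
  {f : x ⟶ y} {g : y ⟶ x}

/-- Reassociated form of the `WCat` associativity axiom. -/
theorem WCat.assoc' (C : WCat.{w₁} W) {x y z t : W} (X : C.Obj x) (Y : C.Obj y)
    (Z : C.Obj z) (T : C.Obj t) :
    (C.Hom X Y ◁ C.ecomp Y Z T) ≫ C.ecomp X Y T =
      (α_ (C.Hom X Y) (C.Hom Y Z) (C.Hom Z T)).inv ≫
        (C.ecomp X Y Z ▷ C.Hom Z T) ≫ C.ecomp X Z T := by
  rw [C.assoc]; simp

/-- Equational data `(u, v, η, ε)` satisfying the triangle on `f` and the two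
pasting equations exhibits `(Y, u)` as a tensor of `X` by `f`. -/
theorem isWTensor_of_data (u : f ⟶ C.Hom X Y) (v : g ⟶ C.Hom Y X)
    (η : 𝟙 y ⟶ g ≫ f) (ε' : f ≫ g ⟶ 𝟙 x)
    (tri : f ◁ η ⊗≫ ε' ▷ f = (ρ_ f).hom ≫ (λ_ f).inv)
    (e1 : (u ▷ g) ≫ (C.Hom X Y ◁ v) ≫ C.ecomp X Y X = ε' ≫ C.eid X)
    (e2 : η ≫ (v ▷ f) ≫ (C.Hom Y X ◁ u) ≫ C.ecomp Y X Y = C.eid Y) :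
    IsWTensor C X f Y u := by
  intro z g' Z
  rw [Function.bijective_iff_has_inverse]
  refine ⟨fun φ => (λ_ g').inv ≫ (η ▷ g') ≫ (α_ g f g').hom ≫ (g ◁ φ) ≫
    (v ▷ (C.Hom X Z)) ≫ C.ecomp Y X Z, fun θ => ?_, fun φ => ?_⟩
  · -- Ψ (Φ θ) = θ
    dsimp only
    calc (λ_ g').inv ≫ (η ▷ g') ≫ (α_ g f g').hom ≫
          (g ◁ ((u ▷ g') ≫ ((C.Hom X Y) ◁ θ) ≫ C.ecomp X Y Z)) ≫ (v ▷ (C.Hom X Z)) ≫ C.ecomp Y X Z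
        = 𝟙 _ ⊗≫ (η ▷ g') ⊗≫ (g ◁ (u ▷ g')) ⊗≫ ((g ≫ (C.Hom X Y)) ◁ θ) ⊗≫
            ((g ◁ C.ecomp X Y Z) ≫ (v ▷ (C.Hom X Z))) ⊗≫ C.ecomp Y X Z := by bicategory
      _ = 𝟙 _ ⊗≫ (η ▷ g') ⊗≫ (g ◁ (u ▷ g')) ⊗≫ ((g ≫ (C.Hom X Y)) ◁ θ) ⊗≫
            ((v ▷ ((C.Hom X Y) ≫ (C.Hom Y Z))) ≫ ((C.Hom Y X) ◁ C.ecomp X Y Z)) ⊗≫ C.ecomp Y X Z := by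
          rw [whisker_exchange]
      _ = 𝟙 _ ⊗≫ (η ▷ g') ⊗≫ (g ◁ (u ▷ g')) ⊗≫
            (((g ≫ (C.Hom X Y)) ◁ θ) ≫ ((v ▷ (C.Hom X Y)) ▷ (C.Hom Y Z))) ⊗≫
            (((C.Hom Y X) ◁ C.ecomp X Y Z) ≫ C.ecomp Y X Z) := by bicategory
      _ = 𝟙 _ ⊗≫ (η ▷ g') ⊗≫ (g ◁ (u ▷ g')) ⊗≫
            (((v ▷ (C.Hom X Y)) ▷ g') ≫ (((C.Hom Y X) ≫ (C.Hom X Y)) ◁ θ)) ⊗≫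
            (((C.Hom Y X) ◁ C.ecomp X Y Z) ≫ C.ecomp Y X Z) := by rw [whisker_exchange]
      _ = 𝟙 _ ⊗≫ (η ▷ g') ⊗≫ (((g ◁ u) ≫ (v ▷ (C.Hom X Y))) ▷ g') ⊗≫ (((C.Hom Y X) ≫ (C.Hom X Y)) ◁ θ) ⊗≫
            ((α_ (C.Hom Y X) (C.Hom X Y) (C.Hom Y Z)).inv ≫ (C.ecomp Y X Y ▷ (C.Hom Y Z)) ≫ C.ecomp Y Y Z) := by
          rw [C.assoc' Y X Y Z]; bicategory
      _ = 𝟙 _ ⊗≫ (η ▷ g') ⊗≫ (((v ▷ f) ≫ ((C.Hom Y X) ◁ u)) ▷ g') ⊗≫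
            ((((C.Hom Y X) ≫ (C.Hom X Y)) ◁ θ) ≫ (C.ecomp Y X Y ▷ (C.Hom Y Z))) ⊗≫ C.ecomp Y Y Z := by
          rw [← whisker_exchange]; bicategory
      _ = 𝟙 _ ⊗≫ (η ▷ g') ⊗≫ (((v ▷ f) ≫ ((C.Hom Y X) ◁ u)) ▷ g') ⊗≫
            ((C.ecomp Y X Y ▷ g') ≫ (C.Hom Y Y ◁ θ)) ⊗≫ C.ecomp Y Y Z := by
          rw [whisker_exchange]
      _ = 𝟙 _ ⊗≫ ((η ≫ (v ▷ f) ≫ ((C.Hom Y X) ◁ u) ≫ C.ecomp Y X Y) ▷ g') ⊗≫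
            ((C.Hom Y Y ◁ θ) ≫ C.ecomp Y Y Z) := by bicategory
      _ = 𝟙 _ ⊗≫ (C.eid Y ▷ g') ⊗≫ ((C.Hom Y Y ◁ θ) ≫ C.ecomp Y Y Z) := by rw [e2]
      _ = 𝟙 _ ⊗≫ ((C.eid Y ▷ g') ≫ (C.Hom Y Y ◁ θ)) ⊗≫ C.ecomp Y Y Z := by bicategory
      _ = 𝟙 _ ⊗≫ ((𝟙 y ◁ θ) ≫ (C.eid Y ▷ (C.Hom Y Z))) ⊗≫ C.ecomp Y Y Z := by
          rw [← whisker_exchange]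
      _ = 𝟙 _ ⊗≫ (𝟙 y ◁ θ) ⊗≫ ((C.eid Y ▷ (C.Hom Y Z)) ≫ C.ecomp Y Y Z) := by bicategory
      _ = 𝟙 _ ⊗≫ (𝟙 y ◁ θ) ⊗≫ (λ_ (C.Hom Y Z)).hom := by rw [C.id_comp]
      _ = θ := by bicategory
  · -- Φ (Ψ φ) = φ
    dsimp only
    calc (u ▷ g') ≫ ((C.Hom X Y) ◁ ((λ_ g').inv ≫ (η ▷ g') ≫ (α_ g f g').hom ≫ (g ◁ φ) ≫
          (v ▷ (C.Hom X Z)) ≫ C.ecomp Y X Z)) ≫ C.ecomp X Y Z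
        = 𝟙 _ ⊗≫ (u ▷ g') ⊗≫ ((C.Hom X Y) ◁ (η ▷ g')) ⊗≫ ((C.Hom X Y) ◁ ((g ◁ φ) ≫ (v ▷ (C.Hom X Z)))) ⊗≫
            (((C.Hom X Y) ◁ C.ecomp Y X Z) ≫ C.ecomp X Y Z) := by bicategory
      _ = 𝟙 _ ⊗≫ (u ▷ g') ⊗≫ ((C.Hom X Y) ◁ (η ▷ g')) ⊗≫
            ((C.Hom X Y) ◁ ((v ▷ (f ≫ g')) ≫ ((C.Hom Y X) ◁ φ))) ⊗≫
            ((α_ (C.Hom X Y) (C.Hom Y X) (C.Hom X Z)).inv ≫ (C.ecomp X Y X ▷ (C.Hom X Z)) ≫ C.ecomp X X Z) := by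
          rw [whisker_exchange, C.assoc' X Y X Z]
      _ = 𝟙 _ ⊗≫ ((u ▷ g') ≫ ((C.Hom X Y) ◁ ((λ_ g').inv ≫ (η ▷ g')))) ⊗≫
            (((C.Hom X Y) ◁ v) ▷ (f ≫ g')) ⊗≫ ((((C.Hom X Y) ≫ (C.Hom Y X)) ◁ φ) ≫ (C.ecomp X Y X ▷ (C.Hom X Z))) ⊗≫
            C.ecomp X X Z := by bicategory
      _ = 𝟙 _ ⊗≫ ((f ◁ ((λ_ g').inv ≫ (η ▷ g'))) ≫ (u ▷ ((g ≫ f) ≫ g'))) ⊗≫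
            (((C.Hom X Y) ◁ v) ▷ (f ≫ g')) ⊗≫ ((C.ecomp X Y X ▷ (f ≫ g')) ≫
              (C.Hom X X ◁ φ)) ⊗≫ C.ecomp X X Z := by
          rw [← whisker_exchange, ← whisker_exchange]
      _ = 𝟙 _ ⊗≫ (f ◁ (η ▷ g')) ⊗≫
            (((u ▷ g) ≫ ((C.Hom X Y) ◁ v) ≫ C.ecomp X Y X) ▷ (f ≫ g')) ⊗≫
            (C.Hom X X ◁ φ) ⊗≫ C.ecomp X X Z := by bicategory
      _ = 𝟙 _ ⊗≫ (f ◁ (η ▷ g')) ⊗≫ ((ε' ≫ C.eid X) ▷ (f ≫ g')) ⊗≫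
            (C.Hom X X ◁ φ) ⊗≫ C.ecomp X X Z := by rw [e1]
      _ = 𝟙 _ ⊗≫ (f ◁ (η ▷ g')) ⊗≫ (ε' ▷ (f ≫ g')) ⊗≫
            ((C.eid X ▷ (f ≫ g')) ≫ (C.Hom X X ◁ φ)) ⊗≫ C.ecomp X X Z := by
          bicategory
      _ = 𝟙 _ ⊗≫ (f ◁ (η ▷ g')) ⊗≫ (ε' ▷ (f ≫ g')) ⊗≫ (𝟙 x ◁ φ) ⊗≫
            ((C.eid X ▷ (C.Hom X Z)) ≫ C.ecomp X X Z) := by rw [← whisker_exchange]; bicategory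
      _ = 𝟙 _ ⊗≫ (f ◁ (η ▷ g')) ⊗≫ (ε' ▷ (f ≫ g')) ⊗≫ (𝟙 x ◁ φ) ⊗≫ (λ_ (C.Hom X Z)).hom := by
          rw [C.id_comp]
      _ = 𝟙 _ ⊗≫ ((f ◁ η ⊗≫ ε' ▷ f) ▷ g') ⊗≫ φ := by bicategory
      _ = 𝟙 _ ⊗≫ (((ρ_ f).hom ≫ (λ_ f).inv) ▷ g') ⊗≫ φ := by rw [tri]
      _ = φ := by bicategory

end Core
section Core2

variable {C : WCat.{v} W} {x y : W} {X : C.Obj x} {Y : C.Obj y}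
  {f : x ⟶ y} {g : y ⟶ x}

/-- From a tensor and an adjunction, extract the equational data `v`. -/
theorem exists_data_of_isWTensor (u : f ⟶ C.Hom X Y)
    (η : 𝟙 y ⟶ g ≫ f) (ε' : f ≫ g ⟶ 𝟙 x)
    (tri : f ◁ η ⊗≫ ε' ▷ f = (ρ_ f).hom ≫ (λ_ f).inv)
    (hT : IsWTensor C X f Y u) :
    ∃ v : g ⟶ C.Hom Y X,
      ((u ▷ g) ≫ (C.Hom X Y ◁ v) ≫ C.ecomp X Y X = ε' ≫ C.eid X) ∧
      (η ≫ (v ▷ f) ≫ (C.Hom Y X ◁ u) ≫ C.ecomp Y X Y = C.eid Y) := by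
  obtain ⟨v, e1⟩ := (hT g X).surjective (ε' ≫ C.eid X)
  dsimp only at e1
  refine ⟨v, e1, (hT (𝟙 y) Y).injective ?_⟩
  calc (u ▷ 𝟙 y) ≫ (C.Hom X Y ◁ (η ≫ (v ▷ f) ≫ (C.Hom Y X ◁ u) ≫ C.ecomp Y X Y)) ≫
        C.ecomp X Y Y
      = 𝟙 _ ⊗≫ (u ▷ 𝟙 y) ⊗≫ (C.Hom X Y ◁ η) ⊗≫ (C.Hom X Y ◁ (v ▷ f)) ⊗≫
          (C.Hom X Y ◁ (C.Hom Y X ◁ u)) ⊗≫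
          ((C.Hom X Y ◁ C.ecomp Y X Y) ≫ C.ecomp X Y Y) := by bicategory
    _ = 𝟙 _ ⊗≫ ((u ▷ 𝟙 y) ≫ (C.Hom X Y ◁ η)) ⊗≫ ((C.Hom X Y ◁ v) ▷ f) ⊗≫
          (((C.Hom X Y ≫ C.Hom Y X) ◁ u) ≫ (C.ecomp X Y X ▷ C.Hom X Y)) ⊗≫
          C.ecomp X X Y := by rw [C.assoc' X Y X Y]; bicategory
    _ = 𝟙 _ ⊗≫ ((f ◁ η) ≫ (u ▷ (g ≫ f))) ⊗≫ ((C.Hom X Y ◁ v) ▷ f) ⊗≫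
          ((C.ecomp X Y X ▷ f) ≫ (C.Hom X X ◁ u)) ⊗≫ C.ecomp X X Y := by
        rw [← whisker_exchange, ← whisker_exchange]
    _ = 𝟙 _ ⊗≫ (f ◁ η) ⊗≫ (((u ▷ g) ≫ (C.Hom X Y ◁ v) ≫ C.ecomp X Y X) ▷ f) ⊗≫
          (C.Hom X X ◁ u) ⊗≫ C.ecomp X X Y := by bicategory
    _ = 𝟙 _ ⊗≫ (f ◁ η) ⊗≫ ((ε' ≫ C.eid X) ▷ f) ⊗≫ (C.Hom X X ◁ u) ⊗≫
          C.ecomp X X Y := by rw [e1]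
    _ = 𝟙 _ ⊗≫ (f ◁ η) ⊗≫ (ε' ▷ f) ⊗≫ ((C.eid X ▷ f) ≫ (C.Hom X X ◁ u)) ⊗≫
          C.ecomp X X Y := by bicategory
    _ = 𝟙 _ ⊗≫ (f ◁ η) ⊗≫ (ε' ▷ f) ⊗≫ (𝟙 x ◁ u) ⊗≫
          ((C.eid X ▷ C.Hom X Y) ≫ C.ecomp X X Y) := by
        rw [← whisker_exchange]; bicategory
    _ = 𝟙 _ ⊗≫ (f ◁ η ⊗≫ ε' ▷ f) ⊗≫ (𝟙 x ◁ u) ⊗≫ (λ_ (C.Hom X Y)).hom := by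
        rw [C.id_comp]; bicategory
    _ = 𝟙 _ ⊗≫ ((ρ_ f).hom ≫ (λ_ f).inv) ⊗≫ (𝟙 x ◁ u) ⊗≫ (λ_ (C.Hom X Y)).hom := by
        rw [tri]
    _ = (u ▷ 𝟙 y) ≫ (C.Hom X Y ◁ C.eid Y) ≫ C.ecomp X Y Y := by
        rw [C.comp_id]; bicategory

end Core2
section Core3

variable {C D : WCat.{v} W} {x y : W}

/-- Tensors are preserved along any `W`-functor in the presence of a left adjoint:
absolute tensors from an adjunction. -/
theorem preservesWTensor_of_adj (G : WFunctor C D) {f : x ⟶ y} {g : y ⟶ x}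
    (adj : Bicategory.Adjunction g f) (X : C.Obj x) (Y : C.Obj y)
    (u : f ⟶ C.Hom X Y) (hT : IsWTensor C X f Y u) :
    PreservesWTensor G X f Y u := by
  have tri : f ◁ adj.unit ⊗≫ adj.counit ▷ f = (ρ_ f).hom ≫ (λ_ f).inv :=
    adj.right_triangle
  unfold PreservesWTensor
  obtain ⟨v, e1, e2⟩ := exists_data_of_isWTensor u adj.unit adj.counit tri hT
  have e1' : ((u ≫ G.map X Y) ▷ g) ≫ (D.Hom (G.obj X) (G.obj Y) ◁ (v ≫ G.map Y X)) ≫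
      D.ecomp (G.obj X) (G.obj Y) (G.obj X) = adj.counit ≫ D.eid (G.obj X) := by
    calc ((u ≫ G.map X Y) ▷ g) ≫ (D.Hom (G.obj X) (G.obj Y) ◁ (v ≫ G.map Y X)) ≫
        D.ecomp (G.obj X) (G.obj Y) (G.obj X)
        = (u ▷ g) ≫ (C.Hom X Y ◁ v) ≫
            ((G.map X Y ▷ C.Hom Y X) ≫ (D.Hom (G.obj X) (G.obj Y) ◁ G.map Y X) ≫
              D.ecomp (G.obj X) (G.obj Y) (G.obj X)) := by
          simp only [comp_whiskerRight, Bicategory.whiskerLeft_comp, Category.assoc,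
            whisker_exchange_assoc]
      _ = (u ▷ g) ≫ (C.Hom X Y ◁ v) ≫ C.ecomp X Y X ≫ G.map X X := by
          rw [← G.map_comp]
      _ = adj.counit ≫ C.eid X ≫ G.map X X := by rw [reassoc_of% e1]
      _ = adj.counit ≫ D.eid (G.obj X) := by rw [G.map_id]
  have e2' : adj.unit ≫ ((v ≫ G.map Y X) ▷ f) ≫
      (D.Hom (G.obj Y) (G.obj X) ◁ (u ≫ G.map X Y)) ≫
        D.ecomp (G.obj Y) (G.obj X) (G.obj Y) = D.eid (G.obj Y) := by
    calc adj.unit ≫ ((v ≫ G.map Y X) ▷ f) ≫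
        (D.Hom (G.obj Y) (G.obj X) ◁ (u ≫ G.map X Y)) ≫
          D.ecomp (G.obj Y) (G.obj X) (G.obj Y)
        = adj.unit ≫ (v ▷ f) ≫ (C.Hom Y X ◁ u) ≫
            ((G.map Y X ▷ C.Hom X Y) ≫ (D.Hom (G.obj Y) (G.obj X) ◁ G.map X Y) ≫
              D.ecomp (G.obj Y) (G.obj X) (G.obj Y)) := by
          simp only [comp_whiskerRight, Bicategory.whiskerLeft_comp, Category.assoc,
            whisker_exchange_assoc]
      _ = adj.unit ≫ (v ▷ f) ≫ (C.Hom Y X ◁ u) ≫ C.ecomp Y X Y ≫ G.map Y Y := by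
          rw [← G.map_comp]
      _ = C.eid Y ≫ G.map Y Y := by rw [reassoc_of% e2]
      _ = D.eid (G.obj Y) := by rw [G.map_id]
  intro z g' Z
  exact isWTensor_of_data (u ≫ G.map X Y) (v ≫ G.map Y X) adj.unit adj.counit tri
    e1' e2' g' Z

end Core3
section Closure

variable (rc : RightClosedStr W)

/-- The internal hom `[f, h]`. -/
abbrev ih {x y z : W} (f : x ⟶ y) (h : x ⟶ z) : y ⟶ z := (rc.ihom f z).obj h

/-- Evaluation `f ≫ [f,h] ⟶ h`. -/
abbrev ev {x y z : W} (f : x ⟶ y) (h : x ⟶ z) : f ≫ ih rc f h ⟶ h :=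
  (rc.adj f z).counit.app h

/-- Transposition across the closure adjunction. -/
abbrev tr {x y z : W} (f : x ⟶ y) {g : y ⟶ z} {h : x ⟶ z} (ψ : f ≫ g ⟶ h) :
    g ⟶ ih rc f h :=
  (rc.adj f z).homEquiv g h ψ

theorem ev_tr {x y z : W} (f : x ⟶ y) {g : y ⟶ z} {h : x ⟶ z} (ψ : f ≫ g ⟶ h) :
    (f ◁ tr rc f ψ) ≫ ev rc f h = ψ := by
  have h1 : (f ◁ tr rc f ψ) ≫ ev rc f h =
      ((rc.adj f z).homEquiv g h).symm (tr rc f ψ) := by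
    rw [Adjunction.homEquiv_counit]; rfl
  rw [h1]; exact Equiv.symm_apply_apply _ _

theorem ev_inj {x y z : W} (f : x ⟶ y) {g : y ⟶ z} {h : x ⟶ z}
    {θ₁ θ₂ : g ⟶ ih rc f h}
    (H : (f ◁ θ₁) ≫ ev rc f h = (f ◁ θ₂) ≫ ev rc f h) : θ₁ = θ₂ := by
  have e : ∀ θ : g ⟶ ih rc f h,
      (f ◁ θ) ≫ ev rc f h = ((rc.adj f z).homEquiv g h).symm θ := by
    intro θ; rw [Adjunction.homEquiv_counit]; rfl
  rw [e, e] at H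
  exact ((rc.adj f z).homEquiv g h).symm.injective H

/-- The composition 2-cell of the `W`-category of right extensions. -/
def ecompP {w a b c : W} (h : w ⟶ a) (k : w ⟶ b) (l : w ⟶ c) :
    ih rc h k ≫ ih rc k l ⟶ ih rc h l :=
  tr rc h ((α_ h (ih rc h k) (ih rc k l)).inv ≫ (ev rc h k ▷ ih rc k l) ≫ ev rc k l)

theorem ev_ecompP {w a b c : W} (h : w ⟶ a) (k : w ⟶ b) (l : w ⟶ c) :
    (h ◁ ecompP rc h k l) ≫ ev rc h l =
      (α_ h (ih rc h k) (ih rc k l)).inv ≫ (ev rc h k ▷ ih rc k l) ≫ ev rc k l :=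
  ev_tr rc h _

/-- The identity 2-cell of the `W`-category of right extensions. -/
def eidP {w a : W} (h : w ⟶ a) : 𝟙 a ⟶ ih rc h h := tr rc h (ρ_ h).hom

theorem ev_eidP {w a : W} (h : w ⟶ a) : (h ◁ eidP rc h) ≫ ev rc h h = (ρ_ h).hom :=
  ev_tr rc h _

/-- The `W`-category of right extensions of 1-cells out of `w`. -/
def P (w : W) : WCat.{v} W where
  Obj z := w ⟶ z
  Hom h k := ih rc h k
  eid h := eidP rc h
  ecomp h k l := ecompP rc h k l
  id_comp {a b} h k := by
    apply ev_inj rc h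
    calc (h ◁ ((eidP rc h ▷ ih rc h k) ≫ ecompP rc h h k)) ≫ ev rc h k
        = 𝟙 _ ⊗≫ (h ◁ (eidP rc h ▷ ih rc h k)) ⊗≫
            ((h ◁ ecompP rc h h k) ≫ ev rc h k) := by bicategory
      _ = 𝟙 _ ⊗≫ (((h ◁ eidP rc h) ≫ ev rc h h) ▷ ih rc h k) ⊗≫ ev rc h k := by
          conv_lhs => rw [ev_ecompP]
          bicategory
      _ = 𝟙 _ ⊗≫ ((ρ_ h).hom ▷ ih rc h k) ⊗≫ ev rc h k := by
          conv_lhs => rw [ev_eidP]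
      _ = (h ◁ (λ_ (ih rc h k)).hom) ≫ ev rc h k := by bicategory
  comp_id {a b} h k := by
    apply ev_inj rc h
    calc (h ◁ ((ih rc h k ◁ eidP rc k) ≫ ecompP rc h k k)) ≫ ev rc h k
        = 𝟙 _ ⊗≫ (h ◁ (ih rc h k ◁ eidP rc k)) ⊗≫
            ((h ◁ ecompP rc h k k) ≫ ev rc h k) := by bicategory
      _ = 𝟙 _ ⊗≫ (((h ≫ ih rc h k) ◁ eidP rc k) ≫ (ev rc h k ▷ ih rc k k)) ⊗≫
            ev rc k k := by
          conv_lhs => rw [ev_ecompP]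
          bicategory
      _ = 𝟙 _ ⊗≫ (ev rc h k ▷ 𝟙 b) ⊗≫ ((k ◁ eidP rc k) ≫ ev rc k k) := by
          conv_lhs => rw [whisker_exchange]
          bicategory
      _ = 𝟙 _ ⊗≫ (ev rc h k ▷ 𝟙 b) ⊗≫ (ρ_ k).hom := by
          conv_lhs => rw [ev_eidP]
      _ = (h ◁ (ρ_ (ih rc h k)).hom) ≫ ev rc h k := by bicategory
  assoc {a b c d} h k l t := by
    apply ev_inj rc h
    calc (h ◁ ((ecompP rc h k l ▷ ih rc l t) ≫ ecompP rc h l t)) ≫ ev rc h t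
        = 𝟙 _ ⊗≫ (h ◁ (ecompP rc h k l ▷ ih rc l t)) ⊗≫
            ((h ◁ ecompP rc h l t) ≫ ev rc h t) := by bicategory
      _ = 𝟙 _ ⊗≫ (((h ◁ ecompP rc h k l) ≫ ev rc h l) ▷ ih rc l t) ⊗≫
            ev rc l t := by
          conv_lhs => rw [ev_ecompP rc h l t]
          bicategory
      _ = 𝟙 _ ⊗≫ ((ev rc h k ▷ ih rc k l) ▷ ih rc l t) ⊗≫
            ((ev rc k l ▷ ih rc l t) ≫ ev rc l t) := by
          conv_lhs => rw [ev_ecompP rc h k l]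
          bicategory
      _ = 𝟙 _ ⊗≫ ((ev rc h k ▷ ih rc k l) ▷ ih rc l t) ⊗≫
            ((k ◁ ecompP rc k l t) ≫ ev rc k t) := by
          conv_rhs => rw [ev_ecompP rc k l t]
          bicategory
      _ = 𝟙 _ ⊗≫ (((h ≫ ih rc h k) ◁ ecompP rc k l t) ≫
            (ev rc h k ▷ ih rc k t)) ⊗≫ ev rc k t := by
          conv_rhs => rw [whisker_exchange]
          bicategory
      _ = (h ◁ ((α_ (ih rc h k) (ih rc k l) (ih rc l t)).hom ≫
            (ih rc h k ◁ ecompP rc k l t) ≫ ecompP rc h k t)) ≫ ev rc h t := by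
          conv_rhs => rw [Bicategory.whiskerLeft_comp, Bicategory.whiskerLeft_comp,
            Category.assoc, Category.assoc, ev_ecompP rc h k t]
          bicategory

end Closure
section Closure2

variable (rc : RightClosedStr W)

/-- The action `[f,h] ≫ [h,k] ⟶ [f,k]` of internal homs. -/
def tmap {x y a b : W} (f : x ⟶ y) (h : x ⟶ a) (k : x ⟶ b) :
    ih rc f h ≫ ih rc h k ⟶ ih rc f k :=
  tr rc f ((α_ f (ih rc f h) (ih rc h k)).inv ≫ (ev rc f h ▷ ih rc h k) ≫ ev rc h k)

theorem ev_tmap {x y a b : W} (f : x ⟶ y) (h : x ⟶ a) (k : x ⟶ b) :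
    (f ◁ tmap rc f h k) ≫ ev rc f k =
      (α_ f (ih rc f h) (ih rc h k)).inv ≫ (ev rc f h ▷ ih rc h k) ≫ ev rc h k :=
  ev_tr rc f _

theorem Gf_map_id {x y a : W} (f : x ⟶ y) (h : x ⟶ a) :
    eidP rc h ≫ tr rc (ih rc f h) (tmap rc f h h) = eidP rc (ih rc f h) := by
    apply ev_inj rc (ih rc f h)
    rw [Bicategory.whiskerLeft_comp, Category.assoc, ev_tr, ev_eidP]
    apply ev_inj rc f
    calc (f ◁ ((ih rc f h ◁ eidP rc h) ≫ tmap rc f h h)) ≫ ev rc f h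
        = 𝟙 _ ⊗≫ (f ◁ (ih rc f h ◁ eidP rc h)) ⊗≫
            ((f ◁ tmap rc f h h) ≫ ev rc f h) := by bicategory
      _ = 𝟙 _ ⊗≫ (((f ≫ ih rc f h) ◁ eidP rc h) ≫ (ev rc f h ▷ ih rc h h)) ⊗≫
            ev rc h h := by
          conv_lhs => rw [ev_tmap rc f h h]
          bicategory
      _ = 𝟙 _ ⊗≫ (ev rc f h ▷ 𝟙 a) ⊗≫ ((h ◁ eidP rc h) ≫ ev rc h h) := by
          conv_lhs => rw [whisker_exchange]
          bicategory
      _ = 𝟙 _ ⊗≫ (ev rc f h ▷ 𝟙 a) ⊗≫ (ρ_ h).hom := by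
          conv_lhs => rw [ev_eidP]
      _ = (f ◁ (ρ_ (ih rc f h)).hom) ≫ ev rc f h := by bicategory
theorem Gf_map_comp {x y a b c : W} (f : x ⟶ y) (h : x ⟶ a) (k : x ⟶ b) (l : x ⟶ c) :
    ecompP rc h k l ≫ tr rc (ih rc f h) (tmap rc f h l) =
      (tr rc (ih rc f h) (tmap rc f h k) ▷ ih rc k l) ≫
        (ih rc (ih rc f h) (ih rc f k) ◁ tr rc (ih rc f k) (tmap rc f k l)) ≫
          ecompP rc (ih rc f h) (ih rc f k) (ih rc f l) := by
    apply ev_inj rc (ih rc f h)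
    apply ev_inj rc f
    have hL : (f ◁ ((ih rc f h ◁ (ecompP rc h k l ≫ tr rc (ih rc f h) (tmap rc f h l))) ≫
          ev rc (ih rc f h) (ih rc f l))) ≫ ev rc f l =
        𝟙 _ ⊗≫ ((ev rc f h ▷ ih rc h k) ▷ ih rc k l) ⊗≫
          ((ev rc h k ▷ ih rc k l) ≫ ev rc k l) := by
      calc (f ◁ ((ih rc f h ◁ (ecompP rc h k l ≫ tr rc (ih rc f h) (tmap rc f h l))) ≫
            ev rc (ih rc f h) (ih rc f l))) ≫ ev rc f l
          = 𝟙 _ ⊗≫ (f ◁ (ih rc f h ◁ ecompP rc h k l)) ⊗≫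
              ((f ◁ ((ih rc f h ◁ tr rc (ih rc f h) (tmap rc f h l)) ≫
                ev rc (ih rc f h) (ih rc f l))) ≫ ev rc f l) := by bicategory
        _ = 𝟙 _ ⊗≫ (f ◁ (ih rc f h ◁ ecompP rc h k l)) ⊗≫
              ((f ◁ tmap rc f h l) ≫ ev rc f l) := by rw [ev_tr]
        _ = 𝟙 _ ⊗≫ (((f ≫ ih rc f h) ◁ ecompP rc h k l) ≫
              (ev rc f h ▷ ih rc h l)) ⊗≫ ev rc h l := by
            conv_lhs => rw [ev_tmap rc f h l]
            bicategory
        _ = 𝟙 _ ⊗≫ (ev rc f h ▷ (ih rc h k ≫ ih rc k l)) ⊗≫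
              ((h ◁ ecompP rc h k l) ≫ ev rc h l) := by
            conv_lhs => rw [whisker_exchange]
            bicategory
        _ = 𝟙 _ ⊗≫ ((ev rc f h ▷ ih rc h k) ▷ ih rc k l) ⊗≫
              ((ev rc h k ▷ ih rc k l) ≫ ev rc k l) := by
            conv_lhs => rw [ev_ecompP rc h k l]
            bicategory
    have hR : (f ◁ ((ih rc f h ◁ ((tr rc (ih rc f h) (tmap rc f h k) ▷ ih rc k l) ≫
          (ih rc (ih rc f h) (ih rc f k) ◁ tr rc (ih rc f k) (tmap rc f k l)) ≫
            ecompP rc (ih rc f h) (ih rc f k) (ih rc f l))) ≫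
          ev rc (ih rc f h) (ih rc f l))) ≫ ev rc f l =
        𝟙 _ ⊗≫ ((ev rc f h ▷ ih rc h k) ▷ ih rc k l) ⊗≫
          ((ev rc h k ▷ ih rc k l) ≫ ev rc k l) := by
      calc (f ◁ ((ih rc f h ◁ ((tr rc (ih rc f h) (tmap rc f h k) ▷ ih rc k l) ≫
            (ih rc (ih rc f h) (ih rc f k) ◁ tr rc (ih rc f k) (tmap rc f k l)) ≫
              ecompP rc (ih rc f h) (ih rc f k) (ih rc f l))) ≫
            ev rc (ih rc f h) (ih rc f l))) ≫ ev rc f l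
          = 𝟙 _ ⊗≫ (f ◁ (ih rc f h ◁ (tr rc (ih rc f h) (tmap rc f h k) ▷ ih rc k l))) ⊗≫
              (f ◁ (ih rc f h ◁ (ih rc (ih rc f h) (ih rc f k) ◁
                tr rc (ih rc f k) (tmap rc f k l)))) ⊗≫
              ((f ◁ ((ih rc f h ◁ ecompP rc (ih rc f h) (ih rc f k) (ih rc f l)) ≫
                ev rc (ih rc f h) (ih rc f l))) ≫ ev rc f l) := by bicategory
        _ = 𝟙 _ ⊗≫ (f ◁ (ih rc f h ◁ (tr rc (ih rc f h) (tmap rc f h k) ▷ ih rc k l))) ⊗≫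
              (f ◁ ((((ih rc f h ≫ ih rc (ih rc f h) (ih rc f k)) ◁
                  tr rc (ih rc f k) (tmap rc f k l)) ≫
                (ev rc (ih rc f h) (ih rc f k) ▷ ih rc (ih rc f k) (ih rc f l))))) ⊗≫
              ((f ◁ ev rc (ih rc f k) (ih rc f l)) ≫ ev rc f l) := by
            conv_lhs => rw [ev_ecompP rc (ih rc f h) (ih rc f k) (ih rc f l)]
            bicategory
        _ = 𝟙 _ ⊗≫ (f ◁ (ih rc f h ◁ (tr rc (ih rc f h) (tmap rc f h k) ▷ ih rc k l))) ⊗≫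
              (f ◁ ((ev rc (ih rc f h) (ih rc f k) ▷ ih rc k l) ≫
                (ih rc f k ◁ tr rc (ih rc f k) (tmap rc f k l)))) ⊗≫
              ((f ◁ ev rc (ih rc f k) (ih rc f l)) ≫ ev rc f l) := by
            conv_lhs => rw [whisker_exchange]
        _ = 𝟙 _ ⊗≫ (f ◁ (((ih rc f h ◁ tr rc (ih rc f h) (tmap rc f h k)) ≫
              ev rc (ih rc f h) (ih rc f k)) ▷ ih rc k l)) ⊗≫
              ((f ◁ ((ih rc f k ◁ tr rc (ih rc f k) (tmap rc f k l)) ≫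
                ev rc (ih rc f k) (ih rc f l))) ≫ ev rc f l) := by bicategory
        _ = 𝟙 _ ⊗≫ (f ◁ (tmap rc f h k ▷ ih rc k l)) ⊗≫
              ((f ◁ tmap rc f k l) ≫ ev rc f l) := by rw [ev_tr, ev_tr]
        _ = 𝟙 _ ⊗≫ (((f ◁ tmap rc f h k) ≫ ev rc f k) ▷ ih rc k l) ⊗≫
              ev rc k l := by
            conv_lhs => rw [ev_tmap rc f k l]
            bicategory
        _ = 𝟙 _ ⊗≫ ((ev rc f h ▷ ih rc h k) ▷ ih rc k l) ⊗≫
              ((ev rc h k ▷ ih rc k l) ≫ ev rc k l) := by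
            conv_lhs => rw [ev_tmap rc f h k]
            bicategory
    exact hL.trans hR.symm

/-- The `W`-functor `[f,−] : P x ⟶ P y`. -/
def Gf {x y : W} (f : x ⟶ y) : WFunctor (P rc x) (P rc y) where
  obj {z} h := ih rc f h
  map {a b} h k := tr rc (ih rc f h) (tmap rc f h k)
  map_id {a} h := Gf_map_id rc f h
  map_comp {a b c} h k l := Gf_map_comp rc f h k l

end Closure2
section Closure3

variable (rc : RightClosedStr W)

/-- If precomposition with `ψ` is bijective on all hom-sets, `ψ` is invertible. -/
theorem isIso_of_precomp_bijective {V : Type*} [Category V] {A B : V} (ψ : A ⟶ B)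
    (H : ∀ Z : V, Function.Bijective fun ξ : B ⟶ Z => ψ ≫ ξ) : IsIso ψ := by
  obtain ⟨χ, hχ⟩ := (H A).surjective (𝟙 A)
  refine ⟨χ, hχ, (H B).injective ?_⟩
  dsimp only at hχ ⊢
  rw [← Category.assoc, hχ]; simp

/-- The unit of the canonical tensor of `𝟙 x` by `f` in `P x`. -/
abbrev u₀ {x y : W} (f : x ⟶ y) : f ⟶ ih rc (𝟙 x) f := tr rc (𝟙 x) (λ_ f).hom

theorem isWTensor_P_aux {x y z : W} (f : x ⟶ y) (g' : y ⟶ z) (Z : x ⟶ z) :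
    Function.Bijective (fun θ : g' ⟶ ih rc f Z =>
      (u₀ rc f ▷ g') ≫ (ih rc (𝟙 x) f ◁ θ) ≫ ecompP rc (𝟙 x) f Z) := by
  have key : ∀ θ : g' ⟶ ih rc f Z,
      ((u₀ rc f ▷ g') ≫ (ih rc (𝟙 x) f ◁ θ) ≫ ecompP rc (𝟙 x) f Z) =
        tr rc (𝟙 x) ((λ_ (f ≫ g')).hom ≫ (f ◁ θ) ≫ ev rc f Z) := by
    intro θ
    apply ev_inj rc (𝟙 x)
    rw [ev_tr]
    calc (𝟙 x ◁ ((u₀ rc f ▷ g') ≫ (ih rc (𝟙 x) f ◁ θ) ≫ ecompP rc (𝟙 x) f Z)) ≫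
        ev rc (𝟙 x) Z
        = 𝟙 _ ⊗≫ (𝟙 x ◁ (u₀ rc f ▷ g')) ⊗≫ (𝟙 x ◁ (ih rc (𝟙 x) f ◁ θ)) ⊗≫
            ((𝟙 x ◁ ecompP rc (𝟙 x) f Z) ≫ ev rc (𝟙 x) Z) := by bicategory
      _ = 𝟙 _ ⊗≫ (𝟙 x ◁ (u₀ rc f ▷ g')) ⊗≫
            (((𝟙 x ≫ ih rc (𝟙 x) f) ◁ θ) ≫ (ev rc (𝟙 x) f ▷ ih rc f Z)) ⊗≫
            ev rc f Z := by
          conv_lhs => rw [ev_ecompP rc (𝟙 x) f Z]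
          bicategory
      _ = 𝟙 _ ⊗≫ ((((𝟙 x ◁ u₀ rc f) ≫ ev rc (𝟙 x) f) ▷ g')) ⊗≫
            ((f ◁ θ) ≫ ev rc f Z) := by
          conv_lhs => rw [whisker_exchange]
          bicategory
      _ = 𝟙 _ ⊗≫ ((λ_ f).hom ▷ g') ⊗≫ ((f ◁ θ) ≫ ev rc f Z) := by
          conv_lhs => rw [ev_tr]
      _ = (λ_ (f ≫ g')).hom ≫ (f ◁ θ) ≫ ev rc f Z := by bicategory
  have heq : (fun θ : g' ⟶ ih rc f Z =>
      (u₀ rc f ▷ g') ≫ (ih rc (𝟙 x) f ◁ θ) ≫ ecompP rc (𝟙 x) f Z) =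
      ⇑((((rc.adj f z).homEquiv g' Z).symm.trans
          ((Iso.homCongr (λ_ (f ≫ g')).symm (Iso.refl Z)).trans
            ((rc.adj (𝟙 x) z).homEquiv (f ≫ g') Z))) ) := by
    funext θ
    rw [key θ]
    simp only [Equiv.trans_apply, Adjunction.homEquiv_counit, precompF_map,
      Iso.homCongr, Equiv.coe_fn_mk, Iso.symm_inv, Iso.refl_hom, Category.comp_id, Category.assoc]
    rfl
  rw [heq]
  exact (Equiv.bijective _)

/-- `(f, u₀)` is a tensor of `𝟙 x` by `f` in the `W`-category `P x`. -/
theorem isWTensor_P {x y : W} (f : x ⟶ y) :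
    IsWTensor (P rc x) (𝟙 x) f f (u₀ rc f) :=
  fun {_} g' Z => isWTensor_P_aux rc f g' Z

end Closure3
section Closure4

variable (rc : RightClosedStr W) {x y : W}

/-- The canonical comparison `[f,𝟙] ≫ f ⟶ [f,f]`. -/
def cc (f : x ⟶ y) : ih rc f (𝟙 x) ≫ f ⟶ ih rc f f :=
  tr rc f ((α_ f (ih rc f (𝟙 x)) f).inv ≫ (ev rc f (𝟙 x) ▷ f) ≫ (λ_ f).hom)

theorem ev_cc (f : x ⟶ y) :
    (f ◁ cc rc f) ≫ ev rc f f =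
      (α_ f (ih rc f (𝟙 x)) f).inv ≫ (ev rc f (𝟙 x) ▷ f) ≫ (λ_ f).hom :=
  ev_tr rc f _

/-- The transpose of the unit of the image tensor is the comparison `cc`. -/
theorem cc_eq (f : x ⟶ y) :
    (ih rc f (𝟙 x) ◁ (u₀ rc f ≫ tr rc (ih rc f (𝟙 x)) (tmap rc f (𝟙 x) f))) ≫
      ev rc (ih rc f (𝟙 x)) (ih rc f f) = cc rc f := by
  rw [Bicategory.whiskerLeft_comp, Category.assoc, ev_tr]
  apply ev_inj rc f
  calc (f ◁ ((ih rc f (𝟙 x) ◁ u₀ rc f) ≫ tmap rc f (𝟙 x) f)) ≫ ev rc f f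
      = 𝟙 _ ⊗≫ (f ◁ (ih rc f (𝟙 x) ◁ u₀ rc f)) ⊗≫
          ((f ◁ tmap rc f (𝟙 x) f) ≫ ev rc f f) := by bicategory
    _ = 𝟙 _ ⊗≫ (((f ≫ ih rc f (𝟙 x)) ◁ u₀ rc f) ≫
          (ev rc f (𝟙 x) ▷ ih rc (𝟙 x) f)) ⊗≫ ev rc (𝟙 x) f := by
        conv_lhs => rw [ev_tmap rc f (𝟙 x) f]
        bicategory
    _ = 𝟙 _ ⊗≫ (ev rc f (𝟙 x) ▷ f) ⊗≫ ((𝟙 x ◁ u₀ rc f) ≫ ev rc (𝟙 x) f) := by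
        conv_lhs => rw [whisker_exchange]
        bicategory
    _ = 𝟙 _ ⊗≫ (ev rc f (𝟙 x) ▷ f) ⊗≫ (λ_ f).hom := by
        conv_lhs => rw [ev_tr]
    _ = (f ◁ cc rc f) ≫ ev rc f f := by rw [ev_cc]; bicategory

/-- The factorization of the image-tensor pasting map through `cc`. -/
theorem star (f : x ⟶ y) {z : W} (g' : y ⟶ z) (Z : y ⟶ z)
    (θ : g' ⟶ ih rc (ih rc f f) Z) :
    (ih rc f (𝟙 x) ◁ (((u₀ rc f ≫ tr rc (ih rc f (𝟙 x)) (tmap rc f (𝟙 x) f)) ▷ g') ≫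
        (ih rc (ih rc f (𝟙 x)) (ih rc f f) ◁ θ) ≫
          ecompP rc (ih rc f (𝟙 x)) (ih rc f f) Z)) ≫ ev rc (ih rc f (𝟙 x)) Z =
      ((α_ (ih rc f (𝟙 x)) f g').inv ≫ (cc rc f ▷ g')) ≫
        ((ih rc f f ◁ θ) ≫ ev rc (ih rc f f) Z) := by
  calc (ih rc f (𝟙 x) ◁ (((u₀ rc f ≫ tr rc (ih rc f (𝟙 x)) (tmap rc f (𝟙 x) f)) ▷ g') ≫
        (ih rc (ih rc f (𝟙 x)) (ih rc f f) ◁ θ) ≫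
          ecompP rc (ih rc f (𝟙 x)) (ih rc f f) Z)) ≫ ev rc (ih rc f (𝟙 x)) Z
      = 𝟙 _ ⊗≫ (ih rc f (𝟙 x) ◁
            ((u₀ rc f ≫ tr rc (ih rc f (𝟙 x)) (tmap rc f (𝟙 x) f)) ▷ g')) ⊗≫
          (ih rc f (𝟙 x) ◁ (ih rc (ih rc f (𝟙 x)) (ih rc f f) ◁ θ)) ⊗≫
          ((ih rc f (𝟙 x) ◁ ecompP rc (ih rc f (𝟙 x)) (ih rc f f) Z) ≫
            ev rc (ih rc f (𝟙 x)) Z) := by bicategory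
    _ = 𝟙 _ ⊗≫ (ih rc f (𝟙 x) ◁
            ((u₀ rc f ≫ tr rc (ih rc f (𝟙 x)) (tmap rc f (𝟙 x) f)) ▷ g')) ⊗≫
          (((ih rc f (𝟙 x) ≫ ih rc (ih rc f (𝟙 x)) (ih rc f f)) ◁ θ) ≫
            (ev rc (ih rc f (𝟙 x)) (ih rc f f) ▷ ih rc (ih rc f f) Z)) ⊗≫
          ev rc (ih rc f f) Z := by
        conv_lhs => rw [ev_ecompP rc (ih rc f (𝟙 x)) (ih rc f f) Z]
        bicategory
    _ = 𝟙 _ ⊗≫ (((ih rc f (𝟙 x) ◁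
            (u₀ rc f ≫ tr rc (ih rc f (𝟙 x)) (tmap rc f (𝟙 x) f))) ≫
          ev rc (ih rc f (𝟙 x)) (ih rc f f)) ▷ g') ⊗≫
          ((ih rc f f ◁ θ) ≫ ev rc (ih rc f f) Z) := by
        conv_lhs => rw [whisker_exchange]
        bicategory
    _ = 𝟙 _ ⊗≫ (cc rc f ▷ g') ⊗≫ ((ih rc f f ◁ θ) ≫ ev rc (ih rc f f) Z) := by
        conv_lhs => rw [cc_eq]
    _ = ((α_ (ih rc f (𝟙 x)) f g').inv ≫ (cc rc f ▷ g')) ≫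
          ((ih rc f f ◁ θ) ≫ ev rc (ih rc f f) Z) := by bicategory

/-- Absoluteness makes the comparison `cc` invertible. -/
theorem isIso_cc (f : x ⟶ y)
    (hyp : ∀ {z : W} (g' : y ⟶ z) (Z : y ⟶ z), Function.Bijective
      (fun θ : g' ⟶ ih rc (ih rc f f) Z =>
        ((u₀ rc f ≫ tr rc (ih rc f (𝟙 x)) (tmap rc f (𝟙 x) f)) ▷ g') ≫
          (ih rc (ih rc f (𝟙 x)) (ih rc f f) ◁ θ) ≫
            ecompP rc (ih rc f (𝟙 x)) (ih rc f f) Z)) :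
    IsIso (cc rc f) := by
  have bij : ∀ Z : y ⟶ y, Function.Bijective
      (fun ξ : ih rc f f ≫ 𝟙 y ⟶ Z =>
        ((α_ (ih rc f (𝟙 x)) f (𝟙 y)).inv ≫ (cc rc f ▷ 𝟙 y)) ≫ ξ) := by
    intro Z
    have hS : Function.Bijective (fun θ : 𝟙 y ⟶ ih rc (ih rc f f) Z =>
        (ih rc f f ◁ θ) ≫ ev rc (ih rc f f) Z) := by
      have h : (fun θ : 𝟙 y ⟶ ih rc (ih rc f f) Z =>
          (ih rc f f ◁ θ) ≫ ev rc (ih rc f f) Z) =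
          ⇑((rc.adj (ih rc f f) y).homEquiv (𝟙 y) Z).symm := by
        funext θ; rw [Adjunction.homEquiv_counit]; rfl
      rw [h]; exact Equiv.bijective _
    have hE : Function.Bijective (fun ψ : f ≫ 𝟙 y ⟶ ih rc (ih rc f (𝟙 x)) Z =>
        (ih rc f (𝟙 x) ◁ ψ) ≫ ev rc (ih rc f (𝟙 x)) Z) := by
      have h : (fun ψ : f ≫ 𝟙 y ⟶ ih rc (ih rc f (𝟙 x)) Z =>
          (ih rc f (𝟙 x) ◁ ψ) ≫ ev rc (ih rc f (𝟙 x)) Z) =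
          ⇑((rc.adj (ih rc f (𝟙 x)) y).homEquiv (f ≫ 𝟙 y) Z).symm := by
        funext ψ; rw [Adjunction.homEquiv_counit]; rfl
      rw [h]; exact Equiv.bijective _
    have hT : Function.Bijective (fun θ : 𝟙 y ⟶ ih rc (ih rc f f) Z =>
        (ih rc f (𝟙 x) ◁
          (((u₀ rc f ≫ tr rc (ih rc f (𝟙 x)) (tmap rc f (𝟙 x) f)) ▷ 𝟙 y) ≫
            (ih rc (ih rc f (𝟙 x)) (ih rc f f) ◁ θ) ≫
              ecompP rc (ih rc f (𝟙 x)) (ih rc f f) Z)) ≫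
          ev rc (ih rc f (𝟙 x)) Z) := hE.comp (hyp (𝟙 y) Z)
    constructor
    · intro ξ₁ ξ₂ hξ
      obtain ⟨θ₁, hθ₁⟩ := hS.surjective ξ₁
      obtain ⟨θ₂, hθ₂⟩ := hS.surjective ξ₂
      dsimp only at hθ₁ hθ₂
      have h12 : θ₁ = θ₂ := by
        apply hT.injective
        dsimp only
        rw [star, star, hθ₁, hθ₂]
        exact hξ
      rw [← hθ₁, ← hθ₂, h12]
    · intro ζ
      obtain ⟨θ, hθ⟩ := hT.surjective ζ
      dsimp only at hθ
      rw [star] at hθ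
      exact ⟨(ih rc f f ◁ θ) ≫ ev rc (ih rc f f) Z, hθ⟩
  haveI hψ : IsIso ((α_ (ih rc f (𝟙 x)) f (𝟙 y)).inv ≫ (cc rc f ▷ 𝟙 y)) :=
    isIso_of_precomp_bijective _ bij
  have h1 : cc rc f ▷ 𝟙 y = (α_ (ih rc f (𝟙 x)) f (𝟙 y)).hom ≫
      ((α_ (ih rc f (𝟙 x)) f (𝟙 y)).inv ≫ (cc rc f ▷ 𝟙 y)) := by simp
  haveI h2 : IsIso (cc rc f ▷ 𝟙 y) := by rw [h1]; infer_instance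
  have h3 : cc rc f = (ρ_ _).inv ≫ (cc rc f ▷ 𝟙 y) ≫ (ρ_ _).hom := by
    rw [Bicategory.whiskerRight_id]; simp
  rw [h3]; infer_instance

/-- From absoluteness in the `P`-categories, extract the adjunction `[f,𝟙] ⊣ f`. -/
theorem adj_of_hyp (f : x ⟶ y)
    (hyp : ∀ {z : W} (g' : y ⟶ z) (Z : y ⟶ z), Function.Bijective
      (fun θ : g' ⟶ ih rc (ih rc f f) Z =>
        ((u₀ rc f ≫ tr rc (ih rc f (𝟙 x)) (tmap rc f (𝟙 x) f)) ▷ g') ≫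
          (ih rc (ih rc f (𝟙 x)) (ih rc f f) ◁ θ) ≫
            ecompP rc (ih rc f (𝟙 x)) (ih rc f f) Z)) :
    Nonempty (Bicategory.Adjunction (ih rc f (𝟙 x)) f) := by
  haveI hiso : IsIso (cc rc f) := isIso_cc rc f hyp
  set η : 𝟙 y ⟶ ih rc f (𝟙 x) ≫ f := tr rc f (ρ_ f).hom ≫ inv (cc rc f) with hη
  have tri_f : f ◁ η ⊗≫ ev rc f (𝟙 x) ▷ f = (ρ_ f).hom ≫ (λ_ f).inv := by
    have h1 : (α_ f (ih rc f (𝟙 x)) f).inv ≫ (ev rc f (𝟙 x) ▷ f) =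
        (f ◁ cc rc f) ≫ ev rc f f ≫ (λ_ f).inv := by
      rw [← Category.assoc, ev_cc rc f]; simp
    calc f ◁ η ⊗≫ ev rc f (𝟙 x) ▷ f
        = (f ◁ tr rc f (ρ_ f).hom) ≫ (f ◁ inv (cc rc f)) ≫
            ((α_ f (ih rc f (𝟙 x)) f).inv ≫ (ev rc f (𝟙 x) ▷ f)) := by
          rw [hη]; bicategory
      _ = (f ◁ tr rc f (ρ_ f).hom) ≫ (f ◁ inv (cc rc f)) ≫ (f ◁ cc rc f) ≫
            ev rc f f ≫ (λ_ f).inv := by rw [h1]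
      _ = (f ◁ tr rc f (ρ_ f).hom) ≫ ev rc f f ≫ (λ_ f).inv := by
          simp only [← Bicategory.whiskerLeft_comp_assoc, ← Bicategory.whiskerLeft_comp,
            Category.assoc, IsIso.inv_hom_id, Category.comp_id]
      _ = (ρ_ f).hom ≫ (λ_ f).inv := by rw [← Category.assoc, ev_tr]
  have Θeq : (λ_ (ih rc f (𝟙 x))).inv ≫ (η ▷ ih rc f (𝟙 x)) ≫
      (α_ (ih rc f (𝟙 x)) f (ih rc f (𝟙 x))).hom ≫
        (ih rc f (𝟙 x) ◁ ev rc f (𝟙 x)) ≫ (ρ_ (ih rc f (𝟙 x))).hom =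
      𝟙 (ih rc f (𝟙 x)) := by
    apply ev_inj rc f
    calc (f ◁ ((λ_ (ih rc f (𝟙 x))).inv ≫ (η ▷ ih rc f (𝟙 x)) ≫
          (α_ (ih rc f (𝟙 x)) f (ih rc f (𝟙 x))).hom ≫
            (ih rc f (𝟙 x) ◁ ev rc f (𝟙 x)) ≫ (ρ_ (ih rc f (𝟙 x))).hom)) ≫
          ev rc f (𝟙 x)
        = 𝟙 _ ⊗≫ (f ◁ (η ▷ ih rc f (𝟙 x))) ⊗≫
            (((f ≫ ih rc f (𝟙 x)) ◁ ev rc f (𝟙 x)) ≫ (ev rc f (𝟙 x) ▷ 𝟙 x)) ⊗≫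
            𝟙 _ := by bicategory
      _ = 𝟙 _ ⊗≫ (f ◁ (η ▷ ih rc f (𝟙 x))) ⊗≫
            ((ev rc f (𝟙 x) ▷ (f ≫ ih rc f (𝟙 x))) ≫ (𝟙 x ◁ ev rc f (𝟙 x))) ⊗≫
            𝟙 _ := by rw [whisker_exchange]
      _ = 𝟙 _ ⊗≫ ((f ◁ η ⊗≫ ev rc f (𝟙 x) ▷ f) ▷ ih rc f (𝟙 x)) ⊗≫
            (𝟙 x ◁ ev rc f (𝟙 x)) ⊗≫ 𝟙 _ := by bicategory
      _ = 𝟙 _ ⊗≫ (((ρ_ f).hom ≫ (λ_ f).inv) ▷ ih rc f (𝟙 x)) ⊗≫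
            (𝟙 x ◁ ev rc f (𝟙 x)) ⊗≫ 𝟙 _ := by rw [tri_f]
      _ = (f ◁ 𝟙 (ih rc f (𝟙 x))) ≫ ev rc f (𝟙 x) := by bicategory
  have tri_g : η ▷ ih rc f (𝟙 x) ⊗≫ ih rc f (𝟙 x) ◁ ev rc f (𝟙 x) =
      (λ_ (ih rc f (𝟙 x))).hom ≫ (ρ_ (ih rc f (𝟙 x))).inv := by
    calc η ▷ ih rc f (𝟙 x) ⊗≫ ih rc f (𝟙 x) ◁ ev rc f (𝟙 x)
        = (λ_ (ih rc f (𝟙 x))).hom ≫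
            ((λ_ (ih rc f (𝟙 x))).inv ≫ (η ▷ ih rc f (𝟙 x)) ≫
              (α_ (ih rc f (𝟙 x)) f (ih rc f (𝟙 x))).hom ≫
                (ih rc f (𝟙 x) ◁ ev rc f (𝟙 x)) ≫ (ρ_ (ih rc f (𝟙 x))).hom) ≫
            (ρ_ (ih rc f (𝟙 x))).inv := by bicategory
      _ = (λ_ (ih rc f (𝟙 x))).hom ≫ (ρ_ (ih rc f (𝟙 x))).inv := by
          rw [Θeq]; simp
  exact ⟨{ unit := η, counit := ev rc f (𝟙 x),
           left_triangle := tri_g, right_triangle := tri_f }⟩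

end Closure4
/-- **Statement 14**: in a right-closed bicategory, tensors by `f` are absolute iff `f`
admits a left adjoint; and in that case `[f, 𝟙 x]` is a left adjoint of `f`. -/
theorem tensors_absolute_iff_leftAdjoint
    (rc : RightClosedStr W) {x y : W} (f : x ⟶ y) :
    ((∀ (C D : WCat.{v} W) (G : WFunctor C D) (X : C.Obj x) (Y : C.Obj y)
        (u : f ⟶ C.Hom X Y), IsWTensor C X f Y u → PreservesWTensor G X f Y u) ↔
      ∃ g : y ⟶ x, Nonempty (Bicategory.Adjunction g f)) ∧
    ((∀ (C D : WCat.{v} W) (G : WFunctor C D) (X : C.Obj x) (Y : C.Obj y)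
        (u : f ⟶ C.Hom X Y), IsWTensor C X f Y u → PreservesWTensor G X f Y u) →
      Nonempty (Bicategory.Adjunction ((rc.ihom f x).obj (𝟙 x)) f)) := by
  have fwd : (∀ (C D : WCat.{v} W) (G : WFunctor C D) (X : C.Obj x) (Y : C.Obj y)
      (u : f ⟶ C.Hom X Y), IsWTensor C X f Y u → PreservesWTensor G X f Y u) →
      Nonempty (Bicategory.Adjunction ((rc.ihom f x).obj (𝟙 x)) f) := by
    intro habs
    have h1 : PreservesWTensor (Gf rc f) (𝟙 x) f f (u₀ rc f) :=
      habs (P rc x) (P rc y) (Gf rc f) (𝟙 x) f (u₀ rc f) (isWTensor_P rc f)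
    exact adj_of_hyp rc f (fun {z} g' Z => h1 g' Z)
  refine ⟨⟨fun h => ⟨_, fwd h⟩, ?_⟩, fwd⟩
  rintro ⟨g, ⟨adj⟩⟩ C D G X Y u hT
  exact preservesWTensor_of_adj G adj X Y u hT

end Paper
end
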